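/- arXiv:0810.1173 — 6 statements merged into one kernel-verified Lean document; each statement's English description precedes it below -/
import Mathlib

section
/- For any 0 < δ < 1, any k ≥ 1, r > 0, any S ∈ W^k_r and any function Ŝ_n defined at the design points x_j = j/n, one has ‖Ŝ_n − S‖_n² ≥ (1 − δ) ‖T_n(Ŝ_n) − S‖² − (δ^{−1} − 1) r/n², where T_n(Ŝ_n) is the step-function extension of Ŝ_n. -/
open Finset MeasureTheory

/-- Sobolev ball `W^k_r`. -/
noncomputable def WBall (k : ℕ) (r : ℝ) : Set (ℝ → ℝ) :=
  {f | (∀ x, f (x + 1) = f x) ∧ ContDiff ℝ k f ∧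
    ∑ j ∈ Finset.range (k + 1), ∫ t in (0:ℝ)..1, (iteratedDeriv j f t) ^ 2 ≤ r}

/-- Empirical squared norm `‖f‖_n² = (1/n) ∑_{l=1}^n f(l/n)²`. -/
noncomputable def empNormSq (n : ℕ) (f : ℝ → ℝ) : ℝ :=
  (1 / (n : ℝ)) * ∑ l ∈ Finset.Icc 1 n, f ((l : ℝ) / n) ^ 2

/-- Step-function extension of a function known at the design points `k/n`:
`T_n(f)(x) = f(x_1)` on `[0, x_1]` and `T_n(f)(x) = f(x_k)` on `(x_{k−1}, x_k]`. -/
noncomputable def stepExt (n : ℕ) (f : ℝ → ℝ) (x : ℝ) : ℝ :=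
  if x ≤ 0 then f (1 / (n : ℝ)) else f ((⌈(n : ℝ) * x⌉ : ℤ) / (n : ℝ))


lemma alg_lem (δ u v : ℝ) (h0 : 0 < δ) :
    (1-δ)*(u+v)^2 ≤ u^2 + (δ⁻¹ - 1)*v^2 := by
  have ht : δ * δ⁻¹ = 1 := mul_inv_cancel₀ (ne_of_gt h0)
  nlinarith [sq_nonneg (δ*u - (1-δ)*v), sq_nonneg v, mul_pos h0 h0, sq_nonneg u]

lemma cs_lem (f : ℝ → ℝ) (hf : Continuous f) (a b : ℝ) (hab : a ≤ b) :
    (∫ x in a..b, f x)^2 ≤ (b - a) * ∫ x in a..b, (f x)^2 := by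
  rcases eq_or_lt_of_le hab with h | h
  · simp [← h]
  set I := ∫ x in a..b, f x with hI
  set m := b - a with hm
  have hm0 : 0 < m := sub_pos.mpr h
  have hint1 : IntervalIntegrable f volume a b := hf.intervalIntegrable a b
  have hint2 : IntervalIntegrable (fun x => (f x)^2) volume a b :=
    (hf.pow 2).intervalIntegrable a b
  have h0 : 0 ≤ ∫ x in a..b, (m * f x - I)^2 :=
    intervalIntegral.integral_nonneg hab (fun x _ => sq_nonneg _)
  have hexp : ∫ x in a..b, (m * f x - I)^2
      = m^2 * (∫ x in a..b, (f x)^2) - 2*m*I*I + I^2 * m := by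
    have heq : ∀ x, (m*f x - I)^2 = m^2 * (f x)^2 - (2*m*I) * f x + I^2 := by
      intro x; ring
    simp_rw [heq]
    rw [intervalIntegral.integral_add (((hint2.const_mul _).sub (hint1.const_mul _)))
        (intervalIntegrable_const),
      intervalIntegral.integral_sub (hint2.const_mul _) (hint1.const_mul _),
      intervalIntegral.integral_const_mul, intervalIntegral.integral_const_mul,
      intervalIntegral.integral_const, smul_eq_mul]
    ring
  rw [hexp] at h0
  nlinarith [h0, hm0, sq_nonneg I]

lemma pt_bound (S : ℝ → ℝ) (hd : Differentiable ℝ S) (hc : Continuous (deriv S))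
    (a b t : ℝ) (ht : t ∈ Set.Icc a b) :
    (S b - S t)^2 ≤ (b - a) * ∫ x in a..b, (deriv S x)^2 := by
  have hftc : ∫ x in t..b, deriv S x = S b - S t :=
    intervalIntegral.integral_deriv_eq_sub (fun x _ => hd x)
      (hc.intervalIntegrable t b)
  have hcs := cs_lem (deriv S) hc t b ht.2
  rw [hftc] at hcs
  have hsplit : ∫ x in a..b, (deriv S x)^2
      = (∫ x in a..t, (deriv S x)^2) + ∫ x in t..b, (deriv S x)^2 :=
    (intervalIntegral.integral_add_adjacent_intervals
      ((hc.pow 2).intervalIntegrable a t) ((hc.pow 2).intervalIntegrable t b)).symm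
  have h1 : (0:ℝ) ≤ ∫ x in a..t, (deriv S x)^2 :=
    intervalIntegral.integral_nonneg ht.1 (fun x _ => sq_nonneg _)
  have h2 : (0:ℝ) ≤ ∫ x in t..b, (deriv S x)^2 :=
    intervalIntegral.integral_nonneg ht.2 (fun x _ => sq_nonneg _)
  have hmono : (∫ x in t..b, (deriv S x)^2) ≤ ∫ x in a..b, (deriv S x)^2 := by
    rw [hsplit]; linarith
  calc (S b - S t)^2 ≤ (b - t) * ∫ x in t..b, (deriv S x)^2 := hcs
    _ ≤ (b - a) * ∫ x in a..b, (deriv S x)^2 := by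
        apply mul_le_mul (by linarith [ht.1]) hmono h2 (by linarith [ht.1, ht.2])

/-- For any `0 < δ < 1`, `S ∈ WBall k r` and any function `Ŝ` defined at the design points,
`‖Ŝ − S‖_n² ≥ (1−δ)‖T_n(Ŝ) − S‖² − (δ⁻¹ − 1) r/n²`. -/
theorem stmt5 (δ : ℝ) (hδ0 : 0 < δ) (hδ1 : δ < 1) (k : ℕ) (hk : 1 ≤ k)
    (r : ℝ) (hr : 0 < r) (S : ℝ → ℝ) (hS : S ∈ WBall k r)
    (n : ℕ) (hn : 1 ≤ n) (Shat : ℝ → ℝ) :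
    empNormSq n (fun x => Shat x - S x)
      ≥ (1 - δ) * (∫ t in (0:ℝ)..1, (stepExt n Shat t - S t) ^ 2)
        - (δ⁻¹ - 1) * r / (n : ℝ) ^ 2 := by
  obtain ⟨hper, hcd, hsum⟩ := hS
  have hn0 : (0:ℝ) < n := by exact_mod_cast hn
  have hk1 : (1:WithTop ℕ∞) ≤ k := by exact_mod_cast hk
  have hd : Differentiable ℝ S := hcd.differentiable (ne_of_gt (lt_of_lt_of_le zero_lt_one hk1))
  have hc : Continuous (deriv S) := hcd.continuous_deriv hk1
  have hScont : Continuous S := hd.continuous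
  -- bound on ∫ (S')²
  have hDr : ∫ t in (0:ℝ)..1, (deriv S t)^2 ≤ r := by
    have h1mem : 1 ∈ Finset.range (k+1) := Finset.mem_range.mpr (by omega)
    have hsingle := Finset.single_le_sum
      (f := fun j => ∫ t in (0:ℝ)..1, (iteratedDeriv j S t)^2)
      (fun j _ => intervalIntegral.integral_nonneg zero_le_one (fun x _ => sq_nonneg _)) h1mem
    simp only [iteratedDeriv_one] at hsingle
    linarith
  have hδinv : 0 ≤ δ⁻¹ - 1 := by
    have : 1 ≤ δ⁻¹ := one_le_inv_iff₀.mpr ⟨hδ0, hδ1.le⟩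
    linarith
  set a : ℕ → ℝ := fun i => (i:ℝ) / n with ha
  have hab : ∀ i : ℕ, a i ≤ a (i+1) := by
    intro i
    simp only [ha]
    gcongr
    · push_cast; linarith

  have hsize : ∀ i : ℕ, a (i+1) - a i = 1/n := by
    intro i
    simp only [ha]
    push_cast
    field_simp
    ring
  -- stepExt equals the right design value on each Ioc
  have hstep : ∀ i : ℕ, ∀ t ∈ Set.Ioc (a i) (a (i+1)), stepExt n Shat t = Shat (a (i+1)) := by
    intro i t ht
    have hi0 : (0:ℝ) ≤ a i := div_nonneg (Nat.cast_nonneg i) hn0.le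
    have htpos : 0 < t := lt_of_le_of_lt hi0 ht.1
    rw [stepExt, if_neg (not_le.mpr htpos)]
    have hceil : ⌈(n:ℝ)*t⌉ = (i:ℤ)+1 := by
      rw [Int.ceil_eq_iff]
      constructor
      · push_cast
        have := (div_lt_iff₀ hn0).mp ht.1
        nlinarith
      · push_cast
        have := (le_div_iff₀ hn0).mp ht.2
        push_cast at this
        nlinarith
    have hcst : (((i:ℤ)+1 : ℤ):ℝ)/(n:ℝ) = a (i+1) := by
      simp only [ha]; push_cast; ring
    rw [hceil, hcst]
  set F : ℝ → ℝ := fun t => (stepExt n Shat t - S t)^2 with hF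
  set G : ℝ → ℝ := fun t => (deriv S t)^2 with hG
  -- integral of F on each subinterval
  have hFeq : ∀ i : ℕ, ∫ t in a i..a (i+1), F t
      = ∫ t in a i..a (i+1), (Shat (a (i+1)) - S t)^2 := by
    intro i
    rw [intervalIntegral.integral_of_le (hab i), intervalIntegral.integral_of_le (hab i)]
    apply setIntegral_congr_fun measurableSet_Ioc
    intro t ht
    simp only [hF]
    rw [hstep i t ht]
  have hFint : ∀ i : ℕ, IntervalIntegrable F volume (a i) (a (i+1)) := by
    intro i
    rw [intervalIntegrable_iff_integrableOn_Ioc_of_le (hab i)]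
    have hcont : Continuous (fun t => (Shat (a (i+1)) - S t)^2) :=
      (continuous_const.sub hScont).pow 2
    apply (hcont.integrableOn_Ioc).congr_fun ?_ measurableSet_Ioc
    intro t ht
    simp only [hF]
    rw [hstep i t ht]
  have hGint : ∀ i : ℕ, IntervalIntegrable G volume (a i) (a (i+1)) :=
    fun i => (hc.pow 2).intervalIntegrable _ _
  have ha0 : a 0 = 0 := by simp [ha]
  have han : a n = 1 := by simp only [ha]; exact div_self hn0.ne'
  have hsplitF : ∑ i ∈ Finset.range n, ∫ t in a i..a (i+1), F t = ∫ t in (0:ℝ)..1, F t := by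
    rw [intervalIntegral.sum_integral_adjacent_intervals (fun i _ => hFint i), ha0, han]
  have hsplitG : ∑ i ∈ Finset.range n, ∫ t in a i..a (i+1), G t = ∫ t in (0:ℝ)..1, G t := by
    rw [intervalIntegral.sum_integral_adjacent_intervals (fun i _ => hGint i), ha0, han]
  -- per-interval key inequality
  have hkey : ∀ i : ℕ, (1-δ) * ∫ t in a i..a (i+1), F t
      ≤ (1/n) * (Shat (a (i+1)) - S (a (i+1)))^2
        + ((δ⁻¹-1) * ((1/n)*(1/n))) * ∫ t in a i..a (i+1), G t := by
    intro i
    set b := a (i+1) with hb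
    set ai := a i with hai
    have hab' : ai ≤ b := hab i
    have hsz : b - ai = 1/n := hsize i
    set c := Shat b with hcdef
    set u := c - S b with hu
    have hScont2 : Continuous (fun t => (c - S t)^2) := (continuous_const.sub hScont).pow 2
    have hSbcont : Continuous (fun t => (S b - S t)^2) := (continuous_const.sub hScont).pow 2
    have hIG : (0:ℝ) ≤ ∫ t in ai..b, G t :=
      intervalIntegral.integral_nonneg hab' (fun x _ => sq_nonneg _)
    have step1 : (1-δ) * ∫ t in ai..b, F t
        = ∫ t in ai..b, (1-δ) * (c - S t)^2 := by
      rw [hFeq i, ← intervalIntegral.integral_const_mul]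
    have step2 : (∫ t in ai..b, (1-δ) * (c - S t)^2)
        ≤ ∫ t in ai..b, (u^2 + (δ⁻¹-1) * (S b - S t)^2) := by
      apply intervalIntegral.integral_mono_on hab'
      · exact ((continuous_const.mul hScont2)).intervalIntegrable _ _
      · exact (continuous_const.add ((continuous_const.mul hSbcont))).intervalIntegrable _ _
      · intro t _
        have : c - S t = u + (S b - S t) := by simp only [hu]; ring
        rw [this]
        exact alg_lem δ u (S b - S t) hδ0
    have step3 : (∫ t in ai..b, (u^2 + (δ⁻¹-1) * (S b - S t)^2))
        = (b - ai) * u^2 + (δ⁻¹-1) * ∫ t in ai..b, (S b - S t)^2 := by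
      rw [intervalIntegral.integral_add (f := fun _ => u^2) (g := fun t => (δ⁻¹-1) * (S b - S t)^2) (intervalIntegrable_const)
          (((continuous_const.mul hSbcont)).intervalIntegrable _ _),
        intervalIntegral.integral_const_mul, intervalIntegral.integral_const, smul_eq_mul]
    have step4 : (∫ t in ai..b, (S b - S t)^2)
        ≤ (b - ai) * ((b - ai) * ∫ t in ai..b, G t) := by
      have hmono : ∀ t ∈ Set.Icc ai b, (S b - S t)^2 ≤ (b - ai) * ∫ x in ai..b, G x :=
        fun t ht => pt_bound S hd hc ai b t ht
      calc (∫ t in ai..b, (S b - S t)^2)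
          ≤ ∫ _ in ai..b, ((b - ai) * ∫ x in ai..b, G x) :=
            intervalIntegral.integral_mono_on hab'
              (hSbcont.intervalIntegrable _ _) intervalIntegrable_const hmono
        _ = (b - ai) * ((b - ai) * ∫ t in ai..b, G t) := by
            rw [intervalIntegral.integral_const, smul_eq_mul]
    have := step1.trans_le (step2.trans_eq step3)
    have hfin : (b - ai) * u^2 + (δ⁻¹-1) * ∫ t in ai..b, (S b - S t)^2
        ≤ (1/n) * u^2 + ((δ⁻¹-1) * ((1/n)*(1/n))) * ∫ t in ai..b, G t := by
      rw [hsz]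
      have h4 : (δ⁻¹-1) * ∫ t in ai..b, (S b - S t)^2
          ≤ (δ⁻¹-1) * ((1/n) * ((1/n) * ∫ t in ai..b, G t)) := by
        apply mul_le_mul_of_nonneg_left ?_ hδinv
        rw [← hsz]
        exact step4
      linarith [h4]
    simp only [hcdef, hu] at hfin ⊢
    linarith [this, hfin]
  -- sum up
  have hsum1 : (1-δ) * ∫ t in (0:ℝ)..1, F t
      ≤ (1/n) * (∑ i ∈ Finset.range n, (Shat (a (i+1)) - S (a (i+1)))^2)
        + ((δ⁻¹-1) * ((1/n)*(1/n))) * ∫ t in (0:ℝ)..1, G t := by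
    rw [← hsplitF, ← hsplitG, Finset.mul_sum, Finset.mul_sum, Finset.mul_sum, ← Finset.sum_add_distrib]
    exact Finset.sum_le_sum (fun i _ => hkey i)
  -- identify the empirical norm
  have hemp : (1/(n:ℝ)) * (∑ i ∈ Finset.range n, (Shat (a (i+1)) - S (a (i+1)))^2)
      = empNormSq n (fun x => Shat x - S x) := by
    rw [empNormSq]
    congr 1
    rw [← Finset.Ico_add_one_right_eq_Icc, Finset.sum_Ico_eq_sum_range]
    apply Finset.sum_congr (by norm_num)
    intro i _
    have hcast : ((1+i:ℕ):ℝ)/(n:ℝ) = a (i+1) := by simp only [ha]; push_cast; ring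
    rw [← hcast]
  have hGr : ((δ⁻¹-1) * ((1/n)*(1/n))) * (∫ t in (0:ℝ)..1, G t)
      ≤ (δ⁻¹-1) * r / (n:ℝ)^2 := by
    have hC : 0 ≤ (δ⁻¹-1) * ((1/n)*(1/n)) := by positivity
    have := mul_le_mul_of_nonneg_left hDr hC
    calc ((δ⁻¹-1) * ((1/n)*(1/n))) * (∫ t in (0:ℝ)..1, G t)
        ≤ ((δ⁻¹-1) * ((1/n)*(1/n))) * r := this
      _ = (δ⁻¹-1) * r / (n:ℝ)^2 := by
          ring
  rw [ge_iff_le, ← hemp]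
  linarith [hsum1, hGr]
end

section
/- For any nonnegative integer m, any integer N ≥ 2 and any x ∈ [0,1], one has | Σ_{l=2}^N l^m (φ_l²(x) − 1) | ≤ 2^m N^m, where (φ_l) is the trigonometric basis on [0,1]. -/
open Finset

/-- Trigonometric basis on `[0,1]`. -/
noncomputable def phiB (j : ℕ) (x : ℝ) : ℝ :=
  if j = 1 then 1
  else if j % 2 = 0 then Real.sqrt 2 * Real.cos (2 * Real.pi * (j / 2 : ℕ) * x)
  else Real.sqrt 2 * Real.sin (2 * Real.pi * (j / 2 : ℕ) * x)

noncomputable def gB (l : ℕ) (x : ℝ) : ℝ :=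
  Real.cos (2 * (2 * Real.pi * (l / 2 : ℕ) * x))

lemma phiB_sq (l : ℕ) (hl : 2 ≤ l) (x : ℝ) :
    (phiB l x) ^ 2 - 1 = (if l % 2 = 0 then gB l x else -gB l x) := by
  have h1 : l ≠ 1 := by omega
  unfold phiB gB
  set θ : ℝ := 2 * Real.pi * (l / 2 : ℕ) * x with hθ
  have hc := Real.cos_two_mul θ
  have hp := Real.sin_sq_add_cos_sq θ
  by_cases h : l % 2 = 0
  · simp only [h1, if_false, h, if_true]
    rw [mul_pow, Real.sq_sqrt (by norm_num : (0:ℝ) ≤ 2)]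
    linarith
  · simp only [h1, if_false, h, if_true]
    rw [mul_pow, Real.sq_sqrt (by norm_num : (0:ℝ) ≤ 2)]
    linarith

lemma gB_abs (l : ℕ) (x : ℝ) : |gB l x| ≤ 1 := Real.abs_cos_le_one _

lemma gB_pair (k : ℕ) (x : ℝ) : gB (2*k+2) x = gB (2*k+3) x := by
  unfold gB
  have h1 : (2*k+2)/2 = k+1 := by omega
  have h2 : (2*k+3)/2 = k+1 := by omega
  rw [h1, h2]

lemma pair_abs (a b g : ℝ) (hab : a ≤ b) (hg : |g| ≤ 1) :
    |(b - a) * g| ≤ b - a := by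
  rw [abs_mul]
  calc |b - a| * |g| ≤ |b - a| * 1 := mul_le_mul_of_nonneg_left hg (abs_nonneg _)
    _ = b - a := by rw [mul_one, abs_of_nonneg (by linarith)]

lemma odd_bound (m K : ℕ) (hK : 1 ≤ K) (x : ℝ) :
    |∑ l ∈ Finset.Icc 2 (2*K+1), (l : ℝ) ^ m * ((phiB l x) ^ 2 - 1)|
      ≤ ((2*K+1 : ℕ) : ℝ) ^ m - 2 ^ m := by
  induction K, hK using Nat.le_induction with
  | base =>
    have hsum : ∑ l ∈ Finset.Icc (2:ℕ) (2*1+1), (l : ℝ) ^ m * ((phiB l x) ^ 2 - 1)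
        = -(((3:ℝ)^m - 2^m) * gB 2 x) := by
      rw [show 2*1+1 = 3 from rfl,
        show (Finset.Icc 2 3 : Finset ℕ) = {2, 3} from rfl,
        Finset.sum_insert (by decide), Finset.sum_singleton,
        phiB_sq 2 (by norm_num), phiB_sq 3 (by norm_num), ← gB_pair 0 x]
      norm_num
      ring
    rw [hsum, abs_neg]
    have h32 : ((2:ℝ))^m ≤ 3^m := pow_le_pow_left₀ (by norm_num) (by norm_num) m
    have := pair_abs ((2:ℝ)^m) (3^m) (gB 2 x) h32 (gB_abs 2 x)
    push_cast
    linarith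
  | succ K hK ih =>
    rw [show 2*(K+1)+1 = 2*K+3 from by ring]
    have h1 : Finset.Icc 2 (2*K+3) = insert (2*K+3) (insert (2*K+2) (Finset.Icc 2 (2*K+1))) := by
      ext a
      simp only [Finset.mem_Icc, Finset.mem_insert]
      omega
    rw [h1, Finset.sum_insert (by simp only [Finset.mem_insert, Finset.mem_Icc]; omega),
      Finset.sum_insert (by simp only [Finset.mem_Icc]; omega),
      phiB_sq (2*K+3) (by omega), phiB_sq (2*K+2) (by omega),
      if_neg (by omega), if_pos (by omega), ← gB_pair K x]
    have hc : ((2*K+3 : ℕ) : ℝ)^m * -gB (2*K+2) x + (((2*K+2 : ℕ) : ℝ)^m * gB (2*K+2) x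
          + ∑ l ∈ Finset.Icc 2 (2*K+1), (l : ℝ) ^ m * ((phiB l x) ^ 2 - 1))
        = (∑ l ∈ Finset.Icc 2 (2*K+1), (l : ℝ) ^ m * ((phiB l x) ^ 2 - 1))
          + -((((2*K+3 : ℕ) : ℝ)^m - ((2*K+2 : ℕ) : ℝ)^m) * gB (2*K+2) x) := by ring
    rw [hc]
    have hle : ((2*K+2 : ℕ) : ℝ)^m ≤ ((2*K+3 : ℕ) : ℝ)^m :=
      pow_le_pow_left₀ (by positivity) (by push_cast; linarith) m
    have hle2 : ((2*K+1 : ℕ) : ℝ)^m ≤ ((2*K+2 : ℕ) : ℝ)^m :=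
      pow_le_pow_left₀ (by positivity) (by push_cast; linarith) m
    have hpa := pair_abs (((2*K+2 : ℕ) : ℝ)^m) (((2*K+3 : ℕ) : ℝ)^m) (gB (2*K+2) x) hle
      (gB_abs _ x)
    calc |(∑ l ∈ Finset.Icc 2 (2*K+1), (l : ℝ) ^ m * ((phiB l x) ^ 2 - 1))
          + -((((2*K+3 : ℕ) : ℝ)^m - ((2*K+2 : ℕ) : ℝ)^m) * gB (2*K+2) x)|
        ≤ |∑ l ∈ Finset.Icc 2 (2*K+1), (l : ℝ) ^ m * ((phiB l x) ^ 2 - 1)|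
          + |-((((2*K+3 : ℕ) : ℝ)^m - ((2*K+2 : ℕ) : ℝ)^m) * gB (2*K+2) x)| := abs_add_le _ _
      _ ≤ (((2*K+1 : ℕ) : ℝ)^m - 2^m)
          + (((2*K+3 : ℕ) : ℝ)^m - ((2*K+2 : ℕ) : ℝ)^m) := by
          rw [abs_neg]; exact add_le_add ih hpa
      _ ≤ ((2*K+3 : ℕ) : ℝ)^m - 2^m := by linarith

/-- For any `m ≥ 0`, `N ≥ 2` and `x ∈ [0,1]`,
`|∑_{l=2}^N l^m (φ_l²(x) − 1)| ≤ 2^m N^m`. -/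
theorem stmt11 (m : ℕ) (N : ℕ) (hN : 2 ≤ N) (x : ℝ) (hx : x ∈ Set.Icc (0:ℝ) 1) :
    |∑ l ∈ Finset.Icc 2 N, (l : ℝ) ^ m * ((phiB l x) ^ 2 - 1)| ≤ 2 ^ m * (N : ℝ) ^ m := by
  have h2m : (1:ℝ) ≤ 2^m := by
    calc (1:ℝ) = 1^m := (one_pow m).symm
      _ ≤ 2^m := pow_le_pow_left₀ zero_le_one one_le_two m
  have hNm : (0:ℝ) ≤ (N:ℝ)^m := by positivity
  rcases Nat.even_or_odd N with ⟨K, hKe⟩ | ⟨K, hKo⟩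
  · -- N = 2K
    have hK1 : 1 ≤ K := by omega
    rcases eq_or_lt_of_le hK1 with h1 | h2
    · -- K = 1, N = 2
      have hN2 : N = 2 := by omega
      subst hN2
      rw [show (Finset.Icc 2 2 : Finset ℕ) = {2} from rfl, Finset.sum_singleton,
        phiB_sq 2 (by norm_num), if_pos (by norm_num)]
      have := pair_abs 0 (((2:ℕ):ℝ)^m) (gB 2 x) (by positivity) (gB_abs 2 x)
      rw [sub_zero] at this
      calc |((2:ℕ):ℝ)^m * gB 2 x| ≤ ((2:ℕ):ℝ)^m := this
        _ ≤ 2^m * ((2:ℕ):ℝ)^m := by push_cast; nlinarith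
    · -- K ≥ 2
      have hKval : N = 2*(K-1)+1 + 1 := by omega
      rw [hKval, Finset.sum_Icc_succ_top (by omega),
        phiB_sq (2*(K-1)+1+1) (by omega), if_pos (by omega)]
      have hodd := odd_bound m (K-1) (by omega) x
      have hgb := gB_abs (2*(K-1)+1+1) x
      have habs : |((2*(K-1)+1+1 : ℕ) : ℝ)^m * gB (2*(K-1)+1+1) x|
          ≤ ((2*(K-1)+1+1 : ℕ) : ℝ)^m := by
        have := pair_abs 0 (((2*(K-1)+1+1 : ℕ) : ℝ)^m) (gB (2*(K-1)+1+1) x)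
          (by positivity) hgb
        rwa [sub_zero] at this
      have htri := abs_add_le
        (∑ l ∈ Finset.Icc 2 (2*(K-1)+1), (l : ℝ) ^ m * ((phiB l x) ^ 2 - 1))
        (((2*(K-1)+1+1 : ℕ) : ℝ)^m * gB (2*(K-1)+1+1) x)
      have hNe : ((N:ℕ):ℝ) = ((2*(K-1)+1+1 : ℕ) : ℝ) := by rw [hKval]
      -- final numeric inequality
      have hfin : (((2*(K-1)+1 : ℕ) : ℝ)^m - 2^m) + ((2*(K-1)+1+1 : ℕ) : ℝ)^m
          ≤ 2^m * ((2*(K-1)+1+1 : ℕ) : ℝ)^m := by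
        have ha : ((2*(K-1)+1 : ℕ) : ℝ)^m ≤ ((2*(K-1)+1+1 : ℕ) : ℝ)^m :=
          pow_le_pow_left₀ (by positivity) (by push_cast; linarith) m
        rcases Nat.eq_zero_or_pos m with hm0 | hm1
        · subst hm0; norm_num
        · have h2le : (2:ℝ) ≤ 2^m := by
            calc (2:ℝ) = 2^1 := (pow_one 2).symm
              _ ≤ 2^m := pow_le_pow_right₀ one_le_two hm1
          have hb : (0:ℝ) ≤ ((2*(K-1)+1+1 : ℕ) : ℝ)^m := by positivity
          have h2m' : (0:ℝ) ≤ 2^m := by positivity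
          nlinarith
      calc |(∑ l ∈ Finset.Icc 2 (2*(K-1)+1), (l : ℝ) ^ m * ((phiB l x) ^ 2 - 1))
            + ((2*(K-1)+1+1 : ℕ) : ℝ)^m * gB (2*(K-1)+1+1) x|
          ≤ |∑ l ∈ Finset.Icc 2 (2*(K-1)+1), (l : ℝ) ^ m * ((phiB l x) ^ 2 - 1)|
            + |((2*(K-1)+1+1 : ℕ) : ℝ)^m * gB (2*(K-1)+1+1) x| := htri
        _ ≤ (((2*(K-1)+1 : ℕ) : ℝ)^m - 2^m) + ((2*(K-1)+1+1 : ℕ) : ℝ)^m :=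
            add_le_add hodd habs
        _ ≤ 2^m * ((2*(K-1)+1+1 : ℕ) : ℝ)^m := hfin
  · -- N = 2K+1 odd
    have hK1 : 1 ≤ K := by omega
    rw [hKo, show 2*K+1 = 2*K+1 from rfl]
    calc |∑ l ∈ Finset.Icc 2 (2*K+1), (l : ℝ) ^ m * ((phiB l x) ^ 2 - 1)|
        ≤ ((2*K+1 : ℕ) : ℝ)^m - 2^m := odd_bound m K hK1 x
      _ ≤ 2^m * ((2*K+1 : ℕ) : ℝ)^m := by
          have h0 : (0:ℝ) ≤ ((2*K+1 : ℕ) : ℝ)^m := by positivity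
          nlinarith
end

section
/- If n is odd, then the first n trigonometric basis functions are orthonormal with respect to the empirical inner product: for any 1 ≤ i, j ≤ n, (1/n) Σ_{l=1}^n φ_i(l/n) φ_j(l/n) = 1 if i = j and = 0 if i ≠ j. -/
open Finset

private lemma expSum13 (n : ℕ) (hn : 0 < n) (k : ℤ) (hk : ¬ (n:ℤ) ∣ k) :
    ∑ l ∈ Finset.Icc 1 n, Complex.exp (2 * Real.pi * Complex.I * k * l / n) = 0 := by
  have hn' : (n:ℂ) ≠ 0 := Nat.cast_ne_zero.mpr hn.ne'
  set z : ℂ := Complex.exp (2 * Real.pi * Complex.I * k / n) with hz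
  have hterm : ∀ l : ℕ, Complex.exp (2 * Real.pi * Complex.I * (k:ℂ) * l / n) = z ^ l := by
    intro l
    rw [hz, ← Complex.exp_nat_mul]
    congr 1; field_simp
  have hzn : z ^ n = 1 := by
    rw [hz, ← Complex.exp_nat_mul]
    have h : (n:ℂ) * (2*Real.pi*Complex.I*k/n) = k * (2*Real.pi*Complex.I) := by
      field_simp
    rw [h, Complex.exp_int_mul_two_pi_mul_I]
  have hz1 : z ≠ 1 := by
    intro h
    rw [hz, Complex.exp_eq_one_iff] at h
    obtain ⟨m, hm⟩ := h
    apply hk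
    refine ⟨m, ?_⟩
    rw [mul_comm]
    have hπ : (Real.pi:ℂ) ≠ 0 := by exact_mod_cast Real.pi_ne_zero
    field_simp at hm
    have : (k:ℂ) = (m:ℂ) * n := by
      have h2 : (2*(Real.pi:ℂ)*Complex.I) ≠ 0 := by
        simp [hπ, Complex.I_ne_zero]
      apply mul_left_cancel₀ h2
      rw [hm]; ring
    exact_mod_cast this
  calc ∑ l ∈ Finset.Icc 1 n, Complex.exp (2 * Real.pi * Complex.I * k * l / n)
      = ∑ l ∈ Finset.Icc 1 n, z ^ l := by
        refine Finset.sum_congr rfl fun l _ => hterm l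
    _ = ∑ l ∈ Finset.range n, z ^ (1 + l) := by
        rw [← Finset.Ico_add_one_right_eq_Icc, Finset.sum_Ico_eq_sum_range]
        simp
    _ = z * ∑ l ∈ Finset.range n, z ^ l := by
        simp [pow_add, Finset.mul_sum]
    _ = 0 := by
        rw [geom_sum_eq hz1, hzn]; simp

private lemma notdvd13 (n : ℕ) (k : ℤ) (hk0 : k ≠ 0) (hk : k.natAbs < n) : ¬ (n:ℤ) ∣ k := by
  intro h
  have h1 : n ∣ k.natAbs := Int.ofNat_dvd_right.mp (Int.dvd_natAbs.mpr h)
  have := Nat.le_of_dvd (Int.natAbs_pos.mpr hk0) h1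
  omega

private lemma cosSum13 (n : ℕ) (hn : 0 < n) (k : ℤ) (hk : k.natAbs < n) :
    ∑ l ∈ Finset.Icc 1 n, Real.cos (2 * Real.pi * k * l / n) = if k = 0 then (n:ℝ) else 0 := by
  by_cases hk0 : k = 0
  · subst hk0; simp
  · rw [if_neg hk0]
    have h := expSum13 n hn k (notdvd13 n k hk0 hk)
    have h2 := congrArg Complex.re h
    rw [Complex.re_sum] at h2
    simp only [Complex.zero_re] at h2
    rw [← h2]
    refine Finset.sum_congr rfl fun l _ => ?_
    have : (2 * Real.pi * Complex.I * k * l / n : ℂ)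
        = ((2 * Real.pi * k * l / n : ℝ) : ℂ) * Complex.I := by
      push_cast; ring
    rw [this, Complex.exp_ofReal_mul_I_re]

private lemma sinSum13 (n : ℕ) (hn : 0 < n) (k : ℤ) (hk : k.natAbs < n) :
    ∑ l ∈ Finset.Icc 1 n, Real.sin (2 * Real.pi * k * l / n) = 0 := by
  by_cases hk0 : k = 0
  · subst hk0; simp
  · have h := expSum13 n hn k (notdvd13 n k hk0 hk)
    have h2 := congrArg Complex.im h
    rw [Complex.im_sum] at h2
    simp only [Complex.zero_im] at h2
    rw [← h2]
    refine Finset.sum_congr rfl fun l _ => ?_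
    have : (2 * Real.pi * Complex.I * k * l / n : ℂ)
        = ((2 * Real.pi * k * l / n : ℝ) : ℂ) * Complex.I := by
      push_cast; ring
    rw [this, Complex.exp_ofReal_mul_I_im]

private lemma sqrt2sq : Real.sqrt 2 * Real.sqrt 2 = 2 := Real.mul_self_sqrt (by norm_num)

private lemma ccSum13 (n : ℕ) (hn : 0 < n) (a b : ℕ)
    (ha1 : 1 ≤ a) (ha2 : 2*a < n) (hb1 : 1 ≤ b) (hb2 : 2*b < n) :
    ∑ l ∈ Finset.Icc 1 n,
      (Real.sqrt 2 * Real.cos (2*Real.pi*(a:ℝ)*((l:ℝ)/n))) *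
      (Real.sqrt 2 * Real.cos (2*Real.pi*(b:ℝ)*((l:ℝ)/n)))
      = if a = b then (n:ℝ) else 0 := by
  have key : ∀ l : ℕ,
      (Real.sqrt 2 * Real.cos (2*Real.pi*(a:ℝ)*((l:ℝ)/n))) *
      (Real.sqrt 2 * Real.cos (2*Real.pi*(b:ℝ)*((l:ℝ)/n)))
      = Real.cos (2*Real.pi*(((a:ℤ)-b : ℤ):ℝ)*l/n) + Real.cos (2*Real.pi*(((a:ℤ)+b : ℤ):ℝ)*l/n) := by
    intro l
    have h1 : (2*Real.pi*(((a:ℤ)-b : ℤ):ℝ)*l/n)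
        = 2*Real.pi*(a:ℝ)*((l:ℝ)/n) - 2*Real.pi*(b:ℝ)*((l:ℝ)/n) := by push_cast; ring
    have h2 : (2*Real.pi*(((a:ℤ)+b : ℤ):ℝ)*l/n)
        = 2*Real.pi*(a:ℝ)*((l:ℝ)/n) + 2*Real.pi*(b:ℝ)*((l:ℝ)/n) := by push_cast; ring
    rw [h1, h2, Real.cos_sub, Real.cos_add]
    linear_combination (Real.cos (2*Real.pi*(a:ℝ)*((l:ℝ)/n)) * Real.cos (2*Real.pi*(b:ℝ)*((l:ℝ)/n))) * sqrt2sq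
  rw [Finset.sum_congr rfl (fun l _ => key l), Finset.sum_add_distrib,
    cosSum13 n hn ((a:ℤ)-b) (by omega), cosSum13 n hn ((a:ℤ)+b) (by omega)]
  have hab : ¬ ((a:ℤ)+b = 0) := by omega
  by_cases h : a = b
  · simp only [h, sub_self, if_pos rfl, if_neg hab, if_pos]
    simp
    omega
  · have : ¬ ((a:ℤ)-b = 0) := by omega
    simp [h, hab, this]

private lemma ssSum13 (n : ℕ) (hn : 0 < n) (a b : ℕ)
    (ha1 : 1 ≤ a) (ha2 : 2*a < n) (hb1 : 1 ≤ b) (hb2 : 2*b < n) :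
    ∑ l ∈ Finset.Icc 1 n,
      (Real.sqrt 2 * Real.sin (2*Real.pi*(a:ℝ)*((l:ℝ)/n))) *
      (Real.sqrt 2 * Real.sin (2*Real.pi*(b:ℝ)*((l:ℝ)/n)))
      = if a = b then (n:ℝ) else 0 := by
  have key : ∀ l : ℕ,
      (Real.sqrt 2 * Real.sin (2*Real.pi*(a:ℝ)*((l:ℝ)/n))) *
      (Real.sqrt 2 * Real.sin (2*Real.pi*(b:ℝ)*((l:ℝ)/n)))
      = Real.cos (2*Real.pi*(((a:ℤ)-b : ℤ):ℝ)*l/n) - Real.cos (2*Real.pi*(((a:ℤ)+b : ℤ):ℝ)*l/n) := by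
    intro l
    have h1 : (2*Real.pi*(((a:ℤ)-b : ℤ):ℝ)*l/n)
        = 2*Real.pi*(a:ℝ)*((l:ℝ)/n) - 2*Real.pi*(b:ℝ)*((l:ℝ)/n) := by push_cast; ring
    have h2 : (2*Real.pi*(((a:ℤ)+b : ℤ):ℝ)*l/n)
        = 2*Real.pi*(a:ℝ)*((l:ℝ)/n) + 2*Real.pi*(b:ℝ)*((l:ℝ)/n) := by push_cast; ring
    rw [h1, h2, Real.cos_sub, Real.cos_add]
    linear_combination (Real.sin (2*Real.pi*(a:ℝ)*((l:ℝ)/n)) * Real.sin (2*Real.pi*(b:ℝ)*((l:ℝ)/n))) * sqrt2sq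
  rw [Finset.sum_congr rfl (fun l _ => key l), Finset.sum_sub_distrib,
    cosSum13 n hn ((a:ℤ)-b) (by omega), cosSum13 n hn ((a:ℤ)+b) (by omega)]
  have hab : ¬ ((a:ℤ)+b = 0) := by omega
  by_cases h : a = b
  · simp only [h, sub_self, if_pos rfl, if_neg hab, if_pos]
    simp
    omega
  · have : ¬ ((a:ℤ)-b = 0) := by omega
    simp [h, hab, this]

private lemma csSum13 (n : ℕ) (hn : 0 < n) (a b : ℕ)
    (ha1 : 1 ≤ a) (ha2 : 2*a < n) (hb1 : 1 ≤ b) (hb2 : 2*b < n) :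
    ∑ l ∈ Finset.Icc 1 n,
      (Real.sqrt 2 * Real.cos (2*Real.pi*(a:ℝ)*((l:ℝ)/n))) *
      (Real.sqrt 2 * Real.sin (2*Real.pi*(b:ℝ)*((l:ℝ)/n))) = 0 := by
  have key : ∀ l : ℕ,
      (Real.sqrt 2 * Real.cos (2*Real.pi*(a:ℝ)*((l:ℝ)/n))) *
      (Real.sqrt 2 * Real.sin (2*Real.pi*(b:ℝ)*((l:ℝ)/n)))
      = Real.sin (2*Real.pi*(((a:ℤ)+b : ℤ):ℝ)*l/n) + Real.sin (2*Real.pi*(((b:ℤ)-a : ℤ):ℝ)*l/n) := by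
    intro l
    have h1 : (2*Real.pi*(((b:ℤ)-a : ℤ):ℝ)*l/n)
        = 2*Real.pi*(b:ℝ)*((l:ℝ)/n) - 2*Real.pi*(a:ℝ)*((l:ℝ)/n) := by push_cast; ring
    have h2 : (2*Real.pi*(((a:ℤ)+b : ℤ):ℝ)*l/n)
        = 2*Real.pi*(a:ℝ)*((l:ℝ)/n) + 2*Real.pi*(b:ℝ)*((l:ℝ)/n) := by push_cast; ring
    rw [h1, h2, Real.sin_sub, Real.sin_add]
    linear_combination (Real.cos (2*Real.pi*(a:ℝ)*((l:ℝ)/n)) * Real.sin (2*Real.pi*(b:ℝ)*((l:ℝ)/n))) * sqrt2sq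
  rw [Finset.sum_congr rfl (fun l _ => key l), Finset.sum_add_distrib,
    sinSum13 n hn ((a:ℤ)+b) (by omega), sinSum13 n hn ((b:ℤ)-a) (by omega)]
  simp

private lemma cSum13 (n : ℕ) (hn : 0 < n) (b : ℕ) (hb1 : 1 ≤ b) (hb2 : 2*b < n) :
    ∑ l ∈ Finset.Icc 1 n, Real.sqrt 2 * Real.cos (2*Real.pi*(b:ℝ)*((l:ℝ)/n)) = 0 := by
  have key : ∀ l : ℕ, Real.sqrt 2 * Real.cos (2*Real.pi*(b:ℝ)*((l:ℝ)/n))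
      = Real.sqrt 2 * Real.cos (2*Real.pi*(((b:ℤ)):ℝ)*l/n) := by
    intro l; congr 1; push_cast; ring
  rw [Finset.sum_congr rfl (fun l _ => key l), ← Finset.mul_sum,
    cosSum13 n hn (b:ℤ) (by omega)]
  have : ¬ ((b:ℤ) = 0) := by omega
  simp [this]
  omega

private lemma sSum13 (n : ℕ) (hn : 0 < n) (b : ℕ) (hb1 : 1 ≤ b) (hb2 : 2*b < n) :
    ∑ l ∈ Finset.Icc 1 n, Real.sqrt 2 * Real.sin (2*Real.pi*(b:ℝ)*((l:ℝ)/n)) = 0 := by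
  have key : ∀ l : ℕ, Real.sqrt 2 * Real.sin (2*Real.pi*(b:ℝ)*((l:ℝ)/n))
      = Real.sqrt 2 * Real.sin (2*Real.pi*(((b:ℤ)):ℝ)*l/n) := by
    intro l; congr 1; push_cast; ring
  rw [Finset.sum_congr rfl (fun l _ => key l), ← Finset.mul_sum,
    sinSum13 n hn (b:ℤ) (by omega)]
  simp

private lemma phiB_one13 (x : ℝ) : phiB 1 x = 1 := by simp [phiB]

private lemma phiB_even13 (m : ℕ) (h1 : m ≠ 1) (h2 : m % 2 = 0) (x : ℝ) :
    phiB m x = Real.sqrt 2 * Real.cos (2*Real.pi*((m/2 : ℕ):ℝ)*x) := by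
  simp [phiB, h1, h2]

private lemma phiB_odd13 (m : ℕ) (h1 : m ≠ 1) (h2 : m % 2 = 1) (x : ℝ) :
    phiB m x = Real.sqrt 2 * Real.sin (2*Real.pi*((m/2 : ℕ):ℝ)*x) := by
  simp [phiB, h1, h2]

/-- If `n` is odd, the first `n` trigonometric basis functions are orthonormal with
respect to the empirical inner product based on the design points `l/n`, `l = 1,…,n`. -/
theorem stmt13 (n : ℕ) (hodd : Odd n) (i j : ℕ)
    (hi1 : 1 ≤ i) (hin : i ≤ n) (hj1 : 1 ≤ j) (hjn : j ≤ n) :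
    (1 / (n : ℝ)) * ∑ l ∈ Finset.Icc 1 n, phiB i ((l : ℝ) / n) * phiB j ((l : ℝ) / n)
      = if i = j then 1 else 0 := by
  have hn : 0 < n := hi1.trans hin
  have hn2 : n % 2 = 1 := Nat.odd_iff.mp hodd
  have hnR : (n:ℝ) ≠ 0 := Nat.cast_ne_zero.mpr hn.ne'
  by_cases hi : i = 1
  · by_cases hj : j = 1
    · subst hi; subst hj
      have hs : ∑ l ∈ Finset.Icc 1 n, phiB 1 ((l:ℝ)/n) * phiB 1 ((l:ℝ)/n) = (n:ℝ) := by
        simp [phiB_one13, Nat.card_Icc]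
      rw [hs, if_pos rfl]; field_simp
    · subst hi
      have hij : ¬ (1 = j) := fun h => hj h.symm
      rw [if_neg hij]
      by_cases hj2 : j % 2 = 0
      · have hs : ∑ l ∈ Finset.Icc 1 n, phiB 1 ((l:ℝ)/n) * phiB j ((l:ℝ)/n)
            = ∑ l ∈ Finset.Icc 1 n, Real.sqrt 2 * Real.cos (2*Real.pi*((j/2 : ℕ):ℝ)*((l:ℝ)/n)) :=
          Finset.sum_congr rfl fun l _ => by
            rw [phiB_one13, phiB_even13 j hj hj2, one_mul]
        rw [hs, cSum13 n hn (j/2) (by omega) (by omega), mul_zero]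
      · have hj2' : j % 2 = 1 := by omega
        have hs : ∑ l ∈ Finset.Icc 1 n, phiB 1 ((l:ℝ)/n) * phiB j ((l:ℝ)/n)
            = ∑ l ∈ Finset.Icc 1 n, Real.sqrt 2 * Real.sin (2*Real.pi*((j/2 : ℕ):ℝ)*((l:ℝ)/n)) :=
          Finset.sum_congr rfl fun l _ => by
            rw [phiB_one13, phiB_odd13 j hj hj2', one_mul]
        rw [hs, sSum13 n hn (j/2) (by omega) (by omega), mul_zero]
  · by_cases hj : j = 1
    · subst hj
      have hij : ¬ (i = 1) := hi
      rw [if_neg hij]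
      by_cases hi2 : i % 2 = 0
      · have hs : ∑ l ∈ Finset.Icc 1 n, phiB i ((l:ℝ)/n) * phiB 1 ((l:ℝ)/n)
            = ∑ l ∈ Finset.Icc 1 n, Real.sqrt 2 * Real.cos (2*Real.pi*((i/2 : ℕ):ℝ)*((l:ℝ)/n)) :=
          Finset.sum_congr rfl fun l _ => by
            rw [phiB_one13, phiB_even13 i hi hi2, mul_one]
        rw [hs, cSum13 n hn (i/2) (by omega) (by omega), mul_zero]
      · have hi2' : i % 2 = 1 := by omega
        have hs : ∑ l ∈ Finset.Icc 1 n, phiB i ((l:ℝ)/n) * phiB 1 ((l:ℝ)/n)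
            = ∑ l ∈ Finset.Icc 1 n, Real.sqrt 2 * Real.sin (2*Real.pi*((i/2 : ℕ):ℝ)*((l:ℝ)/n)) :=
          Finset.sum_congr rfl fun l _ => by
            rw [phiB_one13, phiB_odd13 i hi hi2', mul_one]
        rw [hs, sSum13 n hn (i/2) (by omega) (by omega), mul_zero]
    · by_cases hi2 : i % 2 = 0 <;> by_cases hj2 : j % 2 = 0
      · -- even, even
        have hs : ∑ l ∈ Finset.Icc 1 n, phiB i ((l:ℝ)/n) * phiB j ((l:ℝ)/n)
            = ∑ l ∈ Finset.Icc 1 n,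
              (Real.sqrt 2 * Real.cos (2*Real.pi*((i/2 : ℕ):ℝ)*((l:ℝ)/n))) *
              (Real.sqrt 2 * Real.cos (2*Real.pi*((j/2 : ℕ):ℝ)*((l:ℝ)/n))) :=
          Finset.sum_congr rfl fun l _ => by
            rw [phiB_even13 i hi hi2, phiB_even13 j hj hj2]
        rw [hs, ccSum13 n hn (i/2) (j/2) (by omega) (by omega) (by omega) (by omega)]
        by_cases h : i = j
        · have h2 : i/2 = j/2 := by omega
          rw [if_pos h2, if_pos h]; field_simp
        · have h2 : ¬ (i/2 = j/2) := by omega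
          rw [if_neg h2, if_neg h, mul_zero]
      · -- even, odd
        have hj2' : j % 2 = 1 := by omega
        have hs : ∑ l ∈ Finset.Icc 1 n, phiB i ((l:ℝ)/n) * phiB j ((l:ℝ)/n)
            = ∑ l ∈ Finset.Icc 1 n,
              (Real.sqrt 2 * Real.cos (2*Real.pi*((i/2 : ℕ):ℝ)*((l:ℝ)/n))) *
              (Real.sqrt 2 * Real.sin (2*Real.pi*((j/2 : ℕ):ℝ)*((l:ℝ)/n))) :=
          Finset.sum_congr rfl fun l _ => by
            rw [phiB_even13 i hi hi2, phiB_odd13 j hj hj2']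
        rw [hs, csSum13 n hn (i/2) (j/2) (by omega) (by omega) (by omega) (by omega),
          mul_zero, if_neg (by omega)]
      · -- odd, even
        have hi2' : i % 2 = 1 := by omega
        have hs : ∑ l ∈ Finset.Icc 1 n, phiB i ((l:ℝ)/n) * phiB j ((l:ℝ)/n)
            = ∑ l ∈ Finset.Icc 1 n,
              (Real.sqrt 2 * Real.cos (2*Real.pi*((j/2 : ℕ):ℝ)*((l:ℝ)/n))) *
              (Real.sqrt 2 * Real.sin (2*Real.pi*((i/2 : ℕ):ℝ)*((l:ℝ)/n))) :=
          Finset.sum_congr rfl fun l _ => by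
            rw [phiB_odd13 i hi hi2', phiB_even13 j hj hj2, mul_comm]
        rw [hs, csSum13 n hn (j/2) (i/2) (by omega) (by omega) (by omega) (by omega),
          mul_zero, if_neg (by omega)]
      · -- odd, odd
        have hi2' : i % 2 = 1 := by omega
        have hj2' : j % 2 = 1 := by omega
        have hs : ∑ l ∈ Finset.Icc 1 n, phiB i ((l:ℝ)/n) * phiB j ((l:ℝ)/n)
            = ∑ l ∈ Finset.Icc 1 n,
              (Real.sqrt 2 * Real.sin (2*Real.pi*((i/2 : ℕ):ℝ)*((l:ℝ)/n))) *
              (Real.sqrt 2 * Real.sin (2*Real.pi*((j/2 : ℕ):ℝ)*((l:ℝ)/n))) :=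
          Finset.sum_congr rfl fun l _ => by
            rw [phiB_odd13 i hi hi2', phiB_odd13 j hj hj2']
        rw [hs, ssSum13 n hn (i/2) (j/2) (by omega) (by omega) (by omega) (by omega)]
        by_cases h : i = j
        · have h2 : i/2 = j/2 := by omega
          rw [if_pos h2, if_pos h]; field_simp
        · have h2 : ¬ (i/2 = j/2) := by omega
          rw [if_neg h2, if_neg h, mul_zero]
end

section
/- Fix integers k ≥ 1 and N ≥ 1 and a real R with R > N^k Σ_{i=1}^N i^k − Σ_{i=1}^N i^{2k}. Set a*(R) = (R + Σ_{i=1}^N i^{2k}) / Σ_{i=1}^N i^k and y*_j = a*(R) j^{−k} − 1 for 1 ≤ j ≤ N. Then y*_j > 0 for every j, Σ_{j=1}^N y*_j j^{2k} = R, and for every y = (y_1,…,y_N) with y_j ≥ 0 and Σ_{j=1}^N y_j j^{2k} ≤ R, one has Σ_{j=1}^N y_j/(y_j + 1) ≤ Σ_{j=1}^N y*_j/(y*_j + 1) = N − (Σ_{j=1}^N j^k)²/(R + Σ_{j=1}^N j^{2k}). -/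
open Finset

/-- Lagrange multiplier `a*(R) = (R + ∑ i^{2k}) / ∑ i^k`. -/
noncomputable def aStar (k N : ℕ) (R : ℝ) : ℝ :=
  (R + ∑ i ∈ Finset.Icc 1 N, (i : ℝ) ^ (2 * k)) / ∑ i ∈ Finset.Icc 1 N, (i : ℝ) ^ k

/-- Optimal point `y*_j = a*(R) j^{−k} − 1`. -/
noncomputable def yStar (k N : ℕ) (R : ℝ) (j : ℕ) : ℝ :=
  aStar k N R / (j : ℝ) ^ k - 1

lemma concave_aux (y t : ℝ) (hy : 0 ≤ y) (ht : 0 < t) :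
    y / (y + 1) ≤ t / (t + 1) + (y - t) / (t + 1) ^ 2 := by
  have h1 : 0 < y + 1 := by linarith
  have h2 : 0 < t + 1 := by linarith
  rw [div_add_div _ _ (by positivity) (by positivity),
    div_le_div_iff₀ h1 (by positivity)]
  nlinarith [sq_nonneg (y - t), mul_pos h2 h2, mul_nonneg (sq_nonneg (y - t)) h2.le]

/-- The solution of the constrained maximization of `Ψ_N(y) = ∑ y_j/(y_j+1)` subject to
`∑ y_j j^{2k} ≤ R`, `y_j ≥ 0`, is `y*`, with optimal value
`N − (∑ j^k)²/(R + ∑ j^{2k})`. -/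
theorem stmt15 (k N : ℕ) (hk : 1 ≤ k) (hN : 1 ≤ N) (R : ℝ)
    (hR : (N : ℝ) ^ k * (∑ i ∈ Finset.Icc 1 N, (i : ℝ) ^ k)
            - ∑ i ∈ Finset.Icc 1 N, (i : ℝ) ^ (2 * k) < R) :
    (∀ j ∈ Finset.Icc 1 N, 0 < yStar k N R j) ∧
    (∑ j ∈ Finset.Icc 1 N, yStar k N R j * (j : ℝ) ^ (2 * k) = R) ∧
    (∀ y : ℕ → ℝ, (∀ j ∈ Finset.Icc 1 N, 0 ≤ y j) →
      (∑ j ∈ Finset.Icc 1 N, y j * (j : ℝ) ^ (2 * k)) ≤ R →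
      (∑ j ∈ Finset.Icc 1 N, y j / (y j + 1))
        ≤ ∑ j ∈ Finset.Icc 1 N, yStar k N R j / (yStar k N R j + 1)) ∧
    (∑ j ∈ Finset.Icc 1 N, yStar k N R j / (yStar k N R j + 1)
      = N - (∑ j ∈ Finset.Icc 1 N, (j : ℝ) ^ k) ^ 2
            / (R + ∑ j ∈ Finset.Icc 1 N, (j : ℝ) ^ (2 * k))) := by
  set s1 := ∑ i ∈ Finset.Icc 1 N, (i : ℝ) ^ k with hs1def
  set s2 := ∑ i ∈ Finset.Icc 1 N, (i : ℝ) ^ (2 * k) with hs2def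
  set a := aStar k N R with hadef
  have hs1pos : 0 < s1 := by
    apply Finset.sum_pos
    · intro i hi
      have h1 : 1 ≤ i := (Finset.mem_Icc.mp hi).1
      have : (0:ℝ) < i := by exact_mod_cast Nat.lt_of_lt_of_le Nat.zero_lt_one h1
      positivity
    · exact ⟨1, Finset.mem_Icc.mpr ⟨le_refl 1, hN⟩⟩
  have hNpos : (0:ℝ) < (N:ℝ)^k := by
    have : (0:ℝ) < N := by exact_mod_cast hN
    positivity
  have hRs2 : (N:ℝ)^k * s1 < R + s2 := by linarith
  have hRs2pos : 0 < R + s2 := lt_trans (by positivity) hRs2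
  have haN : (N:ℝ)^k < a := by
    rw [hadef, aStar, ← hs1def, ← hs2def, lt_div_iff₀ hs1pos]
    exact hRs2
  have hapos : 0 < a := lt_trans hNpos haN
  have has1 : a * s1 = R + s2 := by
    rw [hadef, aStar, ← hs1def, ← hs2def, div_mul_cancel₀ _ (ne_of_gt hs1pos)]
  have hjk : ∀ j ∈ Finset.Icc 1 N, 0 < (j:ℝ)^k ∧ (j:ℝ)^k < a := by
    intro j hj
    obtain ⟨hj1, hjN⟩ := Finset.mem_Icc.mp hj
    have hjpos : (0:ℝ) < j := by exact_mod_cast Nat.lt_of_lt_of_le Nat.zero_lt_one hj1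
    have hle : (j:ℝ)^k ≤ (N:ℝ)^k :=
      pow_le_pow_left₀ hjpos.le (by exact_mod_cast hjN) k
    exact ⟨by positivity, lt_of_le_of_lt hle haN⟩
  have hy1 : ∀ j ∈ Finset.Icc 1 N, yStar k N R j + 1 = a / (j:ℝ)^k := by
    intro j hj
    rw [yStar, ← hadef]; ring
  have hypos : ∀ j ∈ Finset.Icc 1 N, 0 < yStar k N R j := by
    intro j hj
    obtain ⟨hjk0, hjka⟩ := hjk j hj
    rw [yStar, ← hadef, sub_pos, lt_div_iff₀ hjk0, one_mul]
    exact hjka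
  have hpow2 : ∀ j : ℕ, (j:ℝ)^(2*k) = (j:ℝ)^k * (j:ℝ)^k := by
    intro j; rw [two_mul, pow_add]
  have hsumR : ∑ j ∈ Finset.Icc 1 N, yStar k N R j * (j : ℝ) ^ (2 * k) = R := by
    have : ∀ j ∈ Finset.Icc 1 N,
        yStar k N R j * (j : ℝ) ^ (2 * k) = a * (j:ℝ)^k - (j:ℝ)^(2*k) := by
      intro j hj
      obtain ⟨hjk0, _⟩ := hjk j hj
      rw [yStar, ← hadef, hpow2 j]
      field_simp
    rw [Finset.sum_congr rfl this, Finset.sum_sub_distrib, ← Finset.mul_sum,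
      ← hs1def, ← hs2def, has1]
    ring
  have hval : ∀ j ∈ Finset.Icc 1 N,
      yStar k N R j / (yStar k N R j + 1) = 1 - (j:ℝ)^k / a := by
    intro j hj
    obtain ⟨hjk0, _⟩ := hjk j hj
    rw [hy1 j hj, yStar, ← hadef]
    have ha0 : a ≠ 0 := ne_of_gt hapos
    have hj0 : ((j:ℝ)^k) ≠ 0 := ne_of_gt hjk0
    field_simp
  have hvalsum : ∑ j ∈ Finset.Icc 1 N, yStar k N R j / (yStar k N R j + 1)
      = N - s1 ^ 2 / (R + s2) := by
    rw [Finset.sum_congr rfl hval, Finset.sum_sub_distrib, Finset.sum_const,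
      Nat.card_Icc]
    simp only [Nat.add_sub_cancel, nsmul_eq_mul, mul_one]
    have : ∑ j ∈ Finset.Icc 1 N, (j:ℝ)^k / a = s1 / a := by
      rw [hs1def, Finset.sum_div]
    rw [this]
    congr 1
    rw [eq_div_iff (ne_of_gt hRs2pos), div_mul_eq_mul_div, ← has1, sq]
    field_simp
  refine ⟨hypos, hsumR, ?_, hvalsum⟩
  intro y hy0 hyR
  have hpt : ∀ j ∈ Finset.Icc 1 N,
      y j / (y j + 1) ≤ yStar k N R j / (yStar k N R j + 1)
        + (y j * (j:ℝ)^(2*k) - yStar k N R j * (j:ℝ)^(2*k)) * (1 / a^2) := by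
    intro j hj
    obtain ⟨hjk0, _⟩ := hjk j hj
    have h := concave_aux (y j) (yStar k N R j) (hy0 j hj) (hypos j hj)
    have heq : (y j - yStar k N R j) / (yStar k N R j + 1) ^ 2
        = (y j * (j:ℝ)^(2*k) - yStar k N R j * (j:ℝ)^(2*k)) * (1 / a^2) := by
      rw [hy1 j hj, hpow2 j, div_pow]
      field_simp
    rw [heq] at h
    exact h
  calc ∑ j ∈ Finset.Icc 1 N, y j / (y j + 1)
      ≤ ∑ j ∈ Finset.Icc 1 N, (yStar k N R j / (yStar k N R j + 1)
        + (y j * (j:ℝ)^(2*k) - yStar k N R j * (j:ℝ)^(2*k)) * (1 / a^2)) :=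
        Finset.sum_le_sum hpt
    _ = (∑ j ∈ Finset.Icc 1 N, yStar k N R j / (yStar k N R j + 1))
        + ((∑ j ∈ Finset.Icc 1 N, y j * (j:ℝ)^(2*k))
          - ∑ j ∈ Finset.Icc 1 N, yStar k N R j * (j:ℝ)^(2*k)) * (1 / a^2) := by
        rw [Finset.sum_add_distrib, ← Finset.sum_mul, Finset.sum_sub_distrib]
    _ ≤ ∑ j ∈ Finset.Icc 1 N, yStar k N R j / (yStar k N R j + 1) := by
        have h1 : (∑ j ∈ Finset.Icc 1 N, y j * (j:ℝ)^(2*k))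
            - ∑ j ∈ Finset.Icc 1 N, yStar k N R j * (j:ℝ)^(2*k) ≤ 0 := by
          rw [hsumR]; linarith
        have h2 : 0 < 1 / a^2 := by positivity
        nlinarith
end

section
/- For any fixed integer k ≥ 1, the normalized maximal value Ψ*_N(R) = N − (Σ_{j=1}^N j^k)²/(R + Σ_{j=1}^N j^{2k}) satisfies k²/(k+1)² ≤ liminf_{N→∞} inf_{R>0} Ψ*_N(R)/N and limsup_{N→∞} sup_{R>0} Ψ*_N(R)/N ≤ 1. -/
open Finset Filter

lemma pow_succ_sub_le (m : ℕ) (x : ℝ) (hx : 0 ≤ x) :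
    (x + 1) ^ m - x ^ m ≤ m * (x + 1) ^ (m - 1) := by
  have h := geom_sum₂_mul (x + 1) x m
  rw [add_sub_cancel_left, mul_one] at h
  rw [← h]
  calc ∑ i ∈ range m, (x + 1) ^ i * x ^ (m - 1 - i)
      ≤ ∑ _i ∈ range m, (x + 1) ^ (m - 1) := by
        refine Finset.sum_le_sum fun i hi => ?_
        have hi' : i + (m - 1 - i) = m - 1 := by
          have := Finset.mem_range.mp hi; omega
        calc (x + 1) ^ i * x ^ (m - 1 - i)
            ≤ (x + 1) ^ i * (x + 1) ^ (m - 1 - i) := by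
              have h0 : (0:ℝ) ≤ (x+1)^i := by positivity
              exact mul_le_mul_of_nonneg_left
                (pow_le_pow_left₀ hx (by linarith) _) h0
          _ = (x + 1) ^ (m - 1) := by rw [← pow_add, hi']
    _ = m * (x + 1) ^ (m - 1) := by
        rw [Finset.sum_const, Finset.card_range, nsmul_eq_mul]

lemma le_pow_succ_sub (m : ℕ) (x : ℝ) (hx : 0 ≤ x) :
    (m : ℝ) * x ^ (m - 1) ≤ (x + 1) ^ m - x ^ m := by
  have h := geom_sum₂_mul (x + 1) x m
  rw [add_sub_cancel_left, mul_one] at h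
  rw [← h]
  calc (m : ℝ) * x ^ (m - 1)
      = ∑ _i ∈ range m, x ^ (m - 1) := by
        rw [Finset.sum_const, Finset.card_range, nsmul_eq_mul]
    _ ≤ ∑ i ∈ range m, (x + 1) ^ i * x ^ (m - 1 - i) := by
        refine Finset.sum_le_sum fun i hi => ?_
        have hi' : i + (m - 1 - i) = m - 1 := by
          have := Finset.mem_range.mp hi; omega
        calc x ^ (m - 1) = x ^ i * x ^ (m - 1 - i) := by rw [← pow_add, hi']
          _ ≤ (x + 1) ^ i * x ^ (m - 1 - i) := by
              have h0 : (0:ℝ) ≤ x ^ (m - 1 - i) := by positivity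
              exact mul_le_mul_of_nonneg_right
                (pow_le_pow_left₀ hx (by linarith) _) h0

lemma S_le (k N : ℕ) :
    ((k : ℝ) + 1) * ∑ j ∈ Finset.Icc 1 N, (j : ℝ) ^ k ≤ ((N : ℝ) + 1) ^ (k + 1) := by
  have tel := Finset.sum_range_sub (fun i => ((i : ℝ) + 1) ^ (k + 1)) N
  have key : ((k : ℝ) + 1) * ∑ j ∈ Finset.Icc 1 N, (j : ℝ) ^ k
      ≤ ((N : ℝ) + 1) ^ (k + 1) - 1 := by
    rw [Finset.mul_sum, ← Finset.Ico_add_one_right_eq_Icc, Finset.sum_Ico_eq_sum_range]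
    calc ∑ i ∈ range N, ((k : ℝ) + 1) * ((1 + i : ℕ) : ℝ) ^ k
        ≤ ∑ i ∈ range N, ((((i + 1 : ℕ) : ℝ) + 1) ^ (k + 1) - (((i : ℕ) : ℝ) + 1) ^ (k + 1)) := by
          refine Finset.sum_le_sum fun i _ => ?_
          have h := le_pow_succ_sub (k + 1) ((i : ℝ) + 1) (by positivity)
          simp only [Nat.add_sub_cancel] at h
          push_cast at h ⊢
          rw [add_comm (1:ℝ) (i:ℝ)]
          linarith
      _ = ((N : ℝ) + 1) ^ (k + 1) - 1 := by
          rw [tel]; norm_num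
  linarith

lemma Q_ge (k N : ℕ) :
    (N : ℝ) ^ (2 * k + 1) ≤ (2 * (k : ℝ) + 1) * ∑ j ∈ Finset.Icc 1 N, (j : ℝ) ^ (2 * k) := by
  have tel := Finset.sum_range_sub (fun i => ((i : ℝ)) ^ (2 * k + 1)) N
  rw [Finset.mul_sum, ← Finset.Ico_add_one_right_eq_Icc, Finset.sum_Ico_eq_sum_range]
  calc (N : ℝ) ^ (2 * k + 1)
      = ∑ i ∈ range N, (((i + 1 : ℕ) : ℝ) ^ (2 * k + 1) - ((i : ℕ) : ℝ) ^ (2 * k + 1)) := by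
        rw [tel, Nat.cast_zero, zero_pow (by omega : 2 * k + 1 ≠ 0), sub_zero]
    _ ≤ ∑ i ∈ range N, (2 * (k : ℝ) + 1) * ((1 + i : ℕ) : ℝ) ^ (2 * k) := by
        refine Finset.sum_le_sum fun i _ => ?_
        have h := pow_succ_sub_le (2 * k + 1) ((i : ℝ)) (Nat.cast_nonneg i)
        simp only [Nat.add_sub_cancel] at h
        push_cast at h ⊢
        rw [add_comm (1:ℝ) (i:ℝ)]
        linarith

/-- Maximal value `Ψ*_N(R) = N − (∑_{j=1}^N j^k)²/(R + ∑_{j=1}^N j^{2k})` of the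
constrained maximization of `∑ y_j/(y_j+1)` subject to `∑ y_j j^{2k} ≤ R`, `y_j ≥ 0`. -/
noncomputable def PsiStar (k N : ℕ) (R : ℝ) : ℝ :=
  N - (∑ j ∈ Finset.Icc 1 N, (j : ℝ) ^ k) ^ 2
        / (R + ∑ j ∈ Finset.Icc 1 N, (j : ℝ) ^ (2 * k))

/-- Asymptotic bounds `k²/(k+1)² ≤ liminf_N inf_{R>0} Ψ*_N(R)/N` and
`limsup_N sup_{R>0} Ψ*_N(R)/N ≤ 1`. -/
theorem stmt16 (k : ℕ) (hk : 1 ≤ k) :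
    (k : ℝ) ^ 2 / ((k : ℝ) + 1) ^ 2
      ≤ liminf (fun N : ℕ => sInf {y | ∃ R : ℝ, 0 < R ∧ y = PsiStar k N R / N}) atTop ∧
    limsup (fun N : ℕ => sSup {y | ∃ R : ℝ, 0 < R ∧ y = PsiStar k N R / N}) atTop ≤ 1 := by
  have hk1 : (0:ℝ) < (k:ℝ) + 1 := by positivity
  have hQ0 : ∀ N : ℕ, (0:ℝ) ≤ ∑ j ∈ Finset.Icc 1 N, (j:ℝ)^(2*k) := fun N =>
    Finset.sum_nonneg fun j _ => by positivity
  have hS0 : ∀ N : ℕ, (0:ℝ) ≤ ∑ j ∈ Finset.Icc 1 N, (j:ℝ)^k := fun N =>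
    Finset.sum_nonneg fun j _ => by positivity
  -- every value is at most 1
  have hub : ∀ N : ℕ, ∀ R : ℝ, 0 < R → PsiStar k N R / N ≤ 1 := by
    intro N R hR
    rcases Nat.eq_zero_or_pos N with h0 | h1
    · subst h0; simp [PsiStar]
    · have hN : (0:ℝ) < N := by exact_mod_cast h1
      rw [div_le_one hN]
      have hd : (0:ℝ) ≤ (∑ j ∈ Finset.Icc 1 N, (j:ℝ)^k)^2
          / (R + ∑ j ∈ Finset.Icc 1 N, (j:ℝ)^(2*k)) := by
        apply div_nonneg (by positivity)
        linarith [hQ0 N]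
      unfold PsiStar; linarith
  -- every value is nonnegative
  have hlb0 : ∀ N : ℕ, ∀ R : ℝ, 0 < R → 0 ≤ PsiStar k N R / N := by
    intro N R hR
    apply div_nonneg _ (Nat.cast_nonneg N)
    have hcs : (∑ j ∈ Finset.Icc 1 N, (j:ℝ)^k)^2
        ≤ (N:ℝ) * ∑ j ∈ Finset.Icc 1 N, (j:ℝ)^(2*k) := by
      have h := sq_sum_le_card_mul_sum_sq (s := Finset.Icc 1 N) (f := fun j => ((j:ℕ):ℝ)^k)
      simp only [Nat.card_Icc, Nat.add_sub_cancel] at h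
      calc (∑ j ∈ Finset.Icc 1 N, (j:ℝ)^k)^2
          ≤ (N:ℝ) * ∑ j ∈ Finset.Icc 1 N, ((j:ℝ)^k)^2 := h
        _ = (N:ℝ) * ∑ j ∈ Finset.Icc 1 N, (j:ℝ)^(2*k) := by
            congr 1; refine Finset.sum_congr rfl fun j _ => ?_
            rw [← pow_mul, mul_comm]
    have hRQ : (0:ℝ) < R + ∑ j ∈ Finset.Icc 1 N, (j:ℝ)^(2*k) := by linarith [hQ0 N]
    unfold PsiStar
    rw [sub_nonneg, div_le_iff₀ hRQ]
    nlinarith [Nat.cast_nonneg (α := ℝ) N, hQ0 N]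
  -- key lower bound
  have hkey : ∀ N : ℕ, 1 ≤ N → ∀ R : ℝ, 0 < R →
      1 - (2*(k:ℝ)+1)/((k:ℝ)+1)^2 * (((N:ℝ)+1)/N)^(2*k+2) ≤ PsiStar k N R / N := by
    intro N hN R hR
    have hN0 : (0:ℝ) < N := by exact_mod_cast hN
    set S := ∑ j ∈ Finset.Icc 1 N, (j:ℝ)^k with hSdef
    set Q := ∑ j ∈ Finset.Icc 1 N, (j:ℝ)^(2*k) with hQdef
    have hSle : S ≤ ((N:ℝ)+1)^(k+1)/((k:ℝ)+1) := by
      rw [le_div_iff₀ hk1, mul_comm S ((k:ℝ)+1)]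
      exact S_le k N
    have hQge : (N:ℝ)^(2*k+1)/(2*(k:ℝ)+1) ≤ Q := by
      rw [div_le_iff₀ (by positivity), mul_comm Q (2*(k:ℝ)+1)]
      exact Q_ge k N
    have hQpos : (0:ℝ) < (N:ℝ)^(2*k+1)/(2*(k:ℝ)+1) := by positivity
    have hRQ : (0:ℝ) < R + Q := by linarith
    have hPsi : PsiStar k N R / N = 1 - S^2/((R+Q)*N) := by
      unfold PsiStar
      rw [← hSdef, ← hQdef, sub_div, div_self (ne_of_gt hN0), div_div]
    rw [hPsi]
    have h1 : S^2 ≤ (((N:ℝ)+1)^(k+1)/((k:ℝ)+1))^2 :=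
      pow_le_pow_left₀ (hS0 N) hSle 2
    have h2 : ((N:ℝ)^(2*k+1)/(2*(k:ℝ)+1)) * N ≤ (R+Q)*N :=
      mul_le_mul_of_nonneg_right (by linarith) (le_of_lt hN0)
    have h3 := div_le_div₀ (by positivity) h1 (by positivity) h2
    have h4 : (((N:ℝ)+1)^(k+1)/((k:ℝ)+1))^2 / (((N:ℝ)^(2*k+1)/(2*(k:ℝ)+1)) * N)
        = (2*(k:ℝ)+1)/((k:ℝ)+1)^2 * (((N:ℝ)+1)/N)^(2*k+2) := by
      rw [div_pow, div_pow]
      field_simp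
      ring
    rw [h4] at h3
    linarith
  -- tendsto of the lower bound
  have htend : Tendsto
      (fun N : ℕ => 1 - (2*(k:ℝ)+1)/((k:ℝ)+1)^2 * (((N:ℝ)+1)/N)^(2*k+2)) atTop
      (nhds ((k:ℝ)^2/((k:ℝ)+1)^2)) := by
    have h1 : Tendsto (fun N : ℕ => ((N:ℝ)+1)/N) atTop (nhds 1) := by
      have h3 : Tendsto (fun N : ℕ => 1 + 1/(N:ℝ)) atTop (nhds (1+0)) :=
        tendsto_const_nhds.add tendsto_one_div_atTop_nhds_zero_nat
      rw [add_zero] at h3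
      refine h3.congr' ?_
      filter_upwards [eventually_ge_atTop 1] with N hN
      have hN0 : (N:ℝ) ≠ 0 := by
        have : (0:ℝ) < N := by exact_mod_cast hN
        exact ne_of_gt this
      field_simp
    have h4 := (tendsto_const_nhds (x := (1:ℝ))).sub
      ((h1.pow (2*k+2)).const_mul ((2*(k:ℝ)+1)/((k:ℝ)+1)^2))
    have h5 : (1:ℝ) - (2*(k:ℝ)+1)/((k:ℝ)+1)^2 * 1^(2*k+2) = (k:ℝ)^2/((k:ℝ)+1)^2 := by
      rw [one_pow, mul_one]
      field_simp
      ring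
    rw [h5] at h4
    exact h4
  constructor
  · rw [← htend.liminf_eq]
    apply liminf_le_liminf
    · filter_upwards [eventually_ge_atTop 1] with N hN
      refine le_csInf ⟨PsiStar k N 1 / N, 1, one_pos, rfl⟩ ?_
      rintro y ⟨R, hR, rfl⟩
      exact hkey N hN R hR
    · exact htend.isBoundedUnder_ge
    · apply isCoboundedUnder_ge_of_eventually_le atTop (x := 1)
      filter_upwards [eventually_ge_atTop 1] with N hN
      have hbdd : BddBelow {y | ∃ R : ℝ, 0 < R ∧ y = PsiStar k N R / N} := by
        refine ⟨1 - (2*(k:ℝ)+1)/((k:ℝ)+1)^2 * (((N:ℝ)+1)/N)^(2*k+2), ?_⟩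
        rintro y ⟨R, hR, rfl⟩
        exact hkey N hN R hR
      exact (csInf_le hbdd ⟨1, one_pos, rfl⟩).trans (hub N 1 one_pos)
  · apply limsup_le_of_le
    · apply isCoboundedUnder_le_of_eventually_le atTop (x := 0)
      filter_upwards with N
      have hbdd : BddAbove {y | ∃ R : ℝ, 0 < R ∧ y = PsiStar k N R / N} := by
        refine ⟨1, ?_⟩
        rintro y ⟨R, hR, rfl⟩
        exact hub N R hR
      exact (hlb0 N 1 one_pos).trans (le_csSup hbdd ⟨1, one_pos, rfl⟩)
    · filter_upwards with N
      refine Real.sSup_le ?_ zero_le_one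
      rintro y ⟨R, hR, rfl⟩
      exact hub N R hR
end

section
/- Let f be continuously differentiable on [−1,1], let n ≥ 1, h ∈ (0,1/2) with nh ≥ 1, and let x̃ ∈ (0,1) satisfy h ≤ x̃ ≤ 1 − h. Then the Riemann-sum approximation over the design points x_i = i/n satisfies | (1/(nh)) Σ_{i=1}^n f((x_i − x̃)/h) 1_{|x_i − x̃| ≤ h} − ∫_{−1}^1 f(v) dv | ≤ (3 max_{|z|≤1} |f'(z)| + 2 max_{|z|≤1} |f(z)|) / (nh). -/
open Finset MeasureTheory

set_option maxHeartbeats 1600000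

/-- Riemann-sum approximation over design points `x_i = i/n` in the window
`[x̃ − h, x̃ + h]`, rescaled to `[−1,1]`, for a continuously differentiable `f`. -/
theorem stmt18 (f f' : ℝ → ℝ)
    (hderiv : ∀ x ∈ Set.Icc (-1:ℝ) 1, HasDerivWithinAt f (f' x) (Set.Icc (-1:ℝ) 1) x)
    (hcont : ContinuousOn f' (Set.Icc (-1:ℝ) 1))
    (n : ℕ) (hn : 1 ≤ n) (h : ℝ) (hh : h ∈ Set.Ioo (0:ℝ) (1/2))
    (hnh : 1 ≤ (n : ℝ) * h) (xt : ℝ) (hxt1 : h ≤ xt) (hxt2 : xt ≤ 1 - h) :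
    |(1 / ((n : ℝ) * h)) *
        (∑ i ∈ Finset.Icc 1 n,
          if |(i : ℝ) / n - xt| ≤ h then f (((i : ℝ) / n - xt) / h) else 0)
      - ∫ v in (-1:ℝ)..1, f v|
    ≤ (3 * sSup ((fun z => |f' z|) '' Set.Icc (-1:ℝ) 1)
        + 2 * sSup ((fun z => |f z|) '' Set.Icc (-1:ℝ) 1)) / ((n : ℝ) * h) := by
  obtain ⟨hh0, hh2⟩ := hh
  have hn0 : (0:ℝ) < n := by exact_mod_cast Nat.lt_of_lt_of_le Nat.zero_lt_one hn
  set Ic : Set ℝ := Set.Icc (-1:ℝ) 1 with hIc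
  have hfc : ContinuousOn f Ic := fun x hx => (hderiv x hx).continuousWithinAt
  set M' := sSup ((fun z => |f' z|) '' Ic) with hM'def
  set M := sSup ((fun z => |f z|) '' Ic) with hMdef
  have hbddM' : BddAbove ((fun z => |f' z|) '' Ic) :=
    isCompact_Icc.bddAbove_image hcont.abs
  have hbddM : BddAbove ((fun z => |f z|) '' Ic) :=
    isCompact_Icc.bddAbove_image hfc.abs
  have hM'le : ∀ z ∈ Ic, |f' z| ≤ M' := fun z hz => le_csSup hbddM' ⟨z, hz, rfl⟩
  have hMle : ∀ z ∈ Ic, |f z| ≤ M := fun z hz => le_csSup hbddM ⟨z, hz, rfl⟩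
  have h0I : (0:ℝ) ∈ Ic := ⟨by norm_num, by norm_num⟩
  have hM'0 : 0 ≤ M' := le_trans (abs_nonneg _) (hM'le 0 h0I)
  have hM0 : 0 ≤ M := le_trans (abs_nonneg _) (hMle 0 h0I)
  have hLip : ∀ y ∈ Ic, ∀ z ∈ Ic, |f y - f z| ≤ M' * |y - z| := by
    intro y hy z hz
    have := Convex.norm_image_sub_le_of_norm_hasDerivWithin_le hderiv
      (fun x hx => hM'le x hx) (convex_Icc _ _) hz hy
    simpa [Real.norm_eq_abs] using this
  -- index bounds
  set b0 := (n:ℝ) * (xt - h) with hb0def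
  set b1 := (n:ℝ) * (xt + h) with hb1def
  have hb0 : 0 ≤ b0 := mul_nonneg hn0.le (by linarith)
  have hb1 : 0 ≤ b1 := mul_nonneg hn0.le (by linarith)
  have hb1n : b1 ≤ n := by nlinarith
  have hb1b0 : b1 - b0 = 2*((n:ℝ)*h) := by ring
  set i0 := max 1 ⌈b0⌉₊ with hi0def
  set i1 := ⌊b1⌋₊ with hi1def
  have hi0lb : b0 ≤ (i0:ℝ) :=
    le_trans (Nat.le_ceil b0) (by exact_mod_cast le_max_right 1 ⌈b0⌉₊)
  have hi0ub : (i0:ℝ) ≤ b0 + 1 := by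
    have h1 : (⌈b0⌉₊:ℝ) < b0 + 1 := Nat.ceil_lt_add_one hb0
    have h2 : (1:ℝ) ≤ b0 + 1 := by linarith
    rw [hi0def]
    push_cast [Nat.cast_max]
    exact max_le h2 h1.le
  have hi1ub : (i1:ℝ) ≤ b1 := Nat.floor_le hb1
  have hi1lb : b1 - 1 < (i1:ℝ) := Nat.sub_one_lt_floor b1
  have hle : i0 ≤ i1 := by
    have : (i0:ℝ) < (i1:ℝ) := by nlinarith
    exact_mod_cast this.le
  have hi01 : 1 ≤ i0 := le_max_left 1 _
  have hi1n : i1 ≤ n := by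
    have := Nat.floor_le_of_le hb1n
    simpa using this
  -- window membership helper
  have hwin : ∀ x : ℝ, xt - h ≤ x → x ≤ xt + h → ((x - xt)/h) ∈ Ic := by
    intro x h1 h2
    constructor
    · rw [le_div_iff₀ hh0]; linarith
    · rw [div_le_iff₀ hh0]; linarith
  have hdivmem : ∀ i : ℕ, b0 ≤ (i:ℝ) → (i:ℝ) ≤ b1 →
      xt - h ≤ (i:ℝ)/n ∧ (i:ℝ)/n ≤ xt + h := by
    intro i h1 h2
    constructor
    · rw [le_div_iff₀ hn0]; linarith
    · rw [div_le_iff₀ hn0]; linarith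
  -- rewrite the sum
  have hsum : (∑ i ∈ Finset.Icc 1 n,
        if |(i : ℝ) / n - xt| ≤ h then f (((i : ℝ) / n - xt) / h) else 0)
      = ∑ i ∈ Finset.Icc i0 i1, f (((i : ℝ) / n - xt) / h) := by
    rw [← Finset.sum_filter]
    congr 1
    ext i
    simp only [Finset.mem_filter, Finset.mem_Icc]
    have hcond : |(i : ℝ) / n - xt| ≤ h ↔ (b0 ≤ (i:ℝ) ∧ (i:ℝ) ≤ b1) := by
      rw [abs_le]
      constructor
      · rintro ⟨u1, u2⟩
        have e1 : xt - h ≤ (i:ℝ)/n := by linarith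
        have e2 : (i:ℝ)/n ≤ xt + h := by linarith
        rw [le_div_iff₀ hn0] at e1
        rw [div_le_iff₀ hn0] at e2
        constructor <;> [linarith; linarith]
      · rintro ⟨u1, u2⟩
        have e1 : xt - h ≤ (i:ℝ)/n := (hdivmem i u1 u2).1
        have e2 : (i:ℝ)/n ≤ xt + h := (hdivmem i u1 u2).2
        constructor <;> linarith
    rw [hcond]
    constructor
    · rintro ⟨⟨q1, q2⟩, q3, q4⟩
      refine ⟨?_, ?_⟩
      · exact max_le q1 (Nat.ceil_le.mpr q3)
      · exact Nat.le_floor q4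
    · rintro ⟨q1, q2⟩
      have w1 : 1 ≤ i := le_trans hi01 q1
      have w2 : i ≤ n := le_trans q2 hi1n
      have w3 : b0 ≤ (i:ℝ) := le_trans hi0lb (by exact_mod_cast q1)
      have w4 : (i:ℝ) ≤ b1 := le_trans (by exact_mod_cast q2) hi1ub
      exact ⟨⟨w1, w2⟩, w3, w4⟩
  -- the scaled function
  set g : ℝ → ℝ := fun x => f ((x - xt)/h) with hg
  have hgcont : ContinuousOn g (Set.Icc (xt-h) (xt+h)) := by
    apply hfc.comp
    · exact (continuousOn_id.sub continuousOn_const).div_const h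
    · intro x hx
      exact hwin x hx.1 hx.2
  have hInt : ∀ a b : ℝ, a ∈ Set.Icc (xt-h) (xt+h) → b ∈ Set.Icc (xt-h) (xt+h) →
      IntervalIntegrable g volume a b := by
    intro a b ha hb
    exact (hgcont.mono (Set.uIcc_subset_Icc ha hb)).intervalIntegrable
  -- change of variables
  have hcov : ∫ v in (-1:ℝ)..1, f v = (1/h) * ∫ x in (xt-h)..(xt+h), g x := by
    have h1 : ∫ x in (xt-h)..(xt+h), g x = ∫ x in (-h)..h, f (x/h) := by
      have := intervalIntegral.integral_comp_sub_right (fun x => f (x/h)) xt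
        (a := xt - h) (b := xt + h)
      simpa [hg, sub_div] using this
    have h2 : ∫ x in (-h)..h, f (x/h) = h * ∫ x in (-1:ℝ)..1, f x := by
      rw [intervalIntegral.integral_comp_div f hh0.ne']
      rw [neg_div, div_self hh0.ne']
      simp [smul_eq_mul]
    rw [h1, h2]
    field_simp
  -- the partition
  set N := i1 - i0 + 1 with hNdef
  have hN1 : 1 ≤ N := by omega
  have hNcast : (N:ℝ) = (i1:ℝ) - (i0:ℝ) + 1 := by
    rw [hNdef]; push_cast [Nat.cast_sub hle]; ring
  set a : ℕ → ℝ := fun k => if k = 0 then xt - h else ((i0:ℝ) + k - 1)/n with hadef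
  have ha0 : a 0 = xt - h := by simp [hadef]
  have hak : ∀ k : ℕ, 1 ≤ k → a k = ((i0:ℝ) + k - 1)/n := by
    intro k hk; simp [hadef, Nat.one_le_iff_ne_zero.mp hk]
  have haks : ∀ k : ℕ, a (k+1) = ((i0:ℝ) + k)/n := by
    intro k
    rw [hak (k+1) (by omega)]
    push_cast; ring_nf
  have haN : a N = (i1:ℝ)/n := by
    rw [hak N hN1, hNcast]; ring_nf
  have hamem : ∀ k : ℕ, k ≤ N → a k ∈ Set.Icc (xt-h) (xt+h) := by
    intro k hk
    rcases Nat.eq_zero_or_pos k with rfl | hk1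
    · rw [ha0]; constructor <;> linarith
    · rw [hak k hk1]
      have e1 : b0 ≤ (i0:ℝ) + k - 1 := by
        have : (1:ℝ) ≤ k := by exact_mod_cast hk1
        linarith
      have e2 : (i0:ℝ) + k - 1 ≤ (i1:ℝ) := by
        have : (k:ℝ) ≤ (N:ℝ) := by exact_mod_cast hk
        rw [hNcast] at this; linarith
      constructor
      · rw [le_div_iff₀ hn0]; linarith
      · rw [div_le_iff₀ hn0]; nlinarith
  have hinv : (1/(n:ℝ)) * n = 1 := by field_simp
  have hstep : ∀ k : ℕ, k < N → a k ≤ a (k+1) ∧ a (k+1) - a k ≤ 1/n := by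
    intro k hk
    rcases Nat.eq_zero_or_pos k with rfl | hk1
    · rw [ha0, haks 0]
      have e : ((i0:ℝ) + ((0:ℕ):ℝ)) = (i0:ℝ) := by push_cast; ring
      rw [e]
      have e1 : xt - h ≤ (i0:ℝ)/n := by rw [le_div_iff₀ hn0]; linarith
      have e2 : (i0:ℝ)/n ≤ (xt - h) + 1/n := by
        have e3 : (i0:ℝ)/n ≤ (b0+1)/n := by gcongr
        have e4 : (b0+1)/n = (xt - h) + 1/n := by
          rw [hb0def]; field_simp
        linarith
      exact ⟨e1, by linarith⟩
    · rw [hak k hk1, haks k]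
      have e : ((i0:ℝ) + k)/n - ((i0:ℝ) + k - 1)/n = (1:ℝ)/n := by
        rw [div_sub_div_same]
        norm_num
      have hn1 : (0:ℝ) ≤ 1/(n:ℝ) := by positivity
      exact ⟨by linarith, by linarith⟩
  have hintk : ∀ k, k < N → IntervalIntegrable g volume (a k) (a (k+1)) :=
    fun k hk => hInt _ _ (hamem k hk.le) (hamem (k+1) hk)
  have hadj : ∑ k ∈ Finset.range N, ∫ x in a k..a (k+1), g x
      = ∫ x in (xt-h)..((i1:ℝ)/n), g x := by
    rw [intervalIntegral.sum_integral_adjacent_intervals hintk, ha0, haN]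
  -- reindex the sum
  have hreind : ∑ i ∈ Finset.Icc i0 i1, f (((i : ℝ) / n - xt) / h)
      = ∑ k ∈ Finset.range N, f ((((i0 + k : ℕ) : ℝ) / n - xt) / h) := by
    rw [← Finset.Ico_add_one_right_eq_Icc, Finset.sum_Ico_eq_sum_range]
    have hNe : i1 + 1 - i0 = N := by
      rw [hNdef]
      omega
    rw [hNe]
  -- key per-interval estimate
  have hkey : ∀ k : ℕ, k < N →
      |(1/(n:ℝ)) * f ((((i0 + k : ℕ) : ℝ) / n - xt) / h) - ∫ x in a k..a (k+1), g x|
        ≤ M'/((n:ℝ)^2*h) + M*(1/n - (a (k+1) - a k)) := by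
    intro k hk
    obtain ⟨hs1, hs2⟩ := hstep k hk
    have hib0 : b0 ≤ ((i0 + k : ℕ):ℝ) :=
      le_trans hi0lb (by exact_mod_cast Nat.le_add_right i0 k)
    have hib1 : ((i0 + k : ℕ):ℝ) ≤ b1 := by
      have h1 : i0 + k ≤ i1 := by omega
      exact le_trans (by exact_mod_cast h1) hi1ub
    have hiwin := hdivmem (i0 + k) hib0 hib1
    have hvIc : ((((i0 + k : ℕ):ℝ)/n - xt)/h) ∈ Ic := hwin _ hiwin.1 hiwin.2
    set c := f ((((i0 + k : ℕ):ℝ)/n - xt)/h) with hcdef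
    have hcM : |c| ≤ M := hMle _ hvIc
    have hak1 : a (k+1) = ((i0 + k : ℕ):ℝ)/n := by
      rw [haks k]; push_cast; ring_nf
    have hbound : ∀ x ∈ Set.uIoc (a k) (a (k+1)), |g x - c| ≤ M' * (1/((n:ℝ)*h)) := by
      intro x hx
      rw [Set.uIoc_of_le hs1] at hx
      have hx1 : a k ≤ x := hx.1.le
      have hx2 : x ≤ a (k+1) := hx.2
      have hxw1 : xt - h ≤ x := le_trans (hamem k hk.le).1 hx1
      have hxw2 : x ≤ xt + h := le_trans hx2 (hamem (k+1) hk).2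
      have hxIc : ((x - xt)/h) ∈ Ic := hwin x hxw1 hxw2
      have hl := hLip _ hxIc _ hvIc
      have e1 : (x - xt)/h - ((((i0 + k : ℕ):ℝ)/n - xt)/h)
          = (x - ((i0 + k : ℕ):ℝ)/n)/h := by ring
      have e2 : |(x - ((i0 + k : ℕ):ℝ)/n)/h| ≤ (1/n)/h := by
        rw [abs_div, abs_of_pos hh0]
        have h1n : (0:ℝ) ≤ 1/n := by positivity
        have hnum : |x - ((i0 + k : ℕ):ℝ)/n| ≤ 1/n := by
          rw [abs_le, ← hak1]
          constructor <;> linarith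
        gcongr
      have hgx : g x = f ((x - xt)/h) := rfl
      calc |g x - c| = |f ((x - xt)/h) - c| := by rw [hgx]
        _ ≤ M' * |(x - xt)/h - ((((i0 + k : ℕ):ℝ)/n - xt)/h)| := hl
        _ = M' * |(x - ((i0 + k : ℕ):ℝ)/n)/h| := by rw [e1]
        _ ≤ M' * ((1/n)/h) := mul_le_mul_of_nonneg_left e2 hM'0
        _ = M' * (1/((n:ℝ)*h)) := by rw [div_div]
    have hgint := hintk k hk
    have hconst : IntervalIntegrable (fun _ => c) volume (a k) (a (k+1)) :=
      intervalIntegrable_const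
    have hsplit : ∫ x in a k..a (k+1), g x
        = (∫ x in a k..a (k+1), (g x - c)) + (a (k+1) - a k) * c := by
      rw [intervalIntegral.integral_sub hgint hconst, intervalIntegral.integral_const]
      rw [smul_eq_mul]; ring
    have hI1 : |∫ x in a k..a (k+1), (g x - c)|
        ≤ (M' * (1/((n:ℝ)*h))) * |a (k+1) - a k| := by
      have hb : ∀ x ∈ Set.uIoc (a k) (a (k+1)), ‖g x - c‖ ≤ M' * (1/((n:ℝ)*h)) := by
        intro x hx; rw [Real.norm_eq_abs]; exact hbound x hx
      simpa [Real.norm_eq_abs] using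
        intervalIntegral.norm_integral_le_of_norm_le_const hb
    have habsL : |a (k+1) - a k| ≤ 1/n := by
      rw [abs_of_nonneg (by linarith)]; exact hs2
    have hI2 : |∫ x in a k..a (k+1), (g x - c)| ≤ M'/((n:ℝ)^2*h) := by
      refine le_trans hI1 ?_
      have e3 : M'/((n:ℝ)^2*h) = (M' * (1/((n:ℝ)*h))) * (1/n) := by
        rw [mul_one_div, mul_one_div, div_div]
        ring_nf
      rw [e3]
      exact mul_le_mul_of_nonneg_left habsL (by positivity)
    rw [hsplit]
    have e4 : (1/(n:ℝ)) * c - ((∫ x in a k..a (k+1), (g x - c)) + (a (k+1) - a k) * c)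
        = (1/(n:ℝ) - (a (k+1) - a k)) * c - ∫ x in a k..a (k+1), (g x - c) := by ring
    rw [e4]
    have htri := abs_sub ((1/(n:ℝ) - (a (k+1) - a k)) * c)
      (∫ x in a k..a (k+1), (g x - c))
    have h5 : |(1/(n:ℝ) - (a (k+1) - a k)) * c| ≤ M*(1/n - (a (k+1) - a k)) := by
      rw [abs_mul, abs_of_nonneg (by linarith [hs2])]
      rw [mul_comm M]
      exact mul_le_mul_of_nonneg_left hcM (by linarith [hs2])
    linarith [htri, h5, hI2]
  -- tail estimate
  have htail : |∫ x in ((i1:ℝ)/n)..(xt+h), g x| ≤ M/n := by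
    have h1 : b0 ≤ (i1:ℝ) := le_trans hi0lb (by exact_mod_cast hle)
    have hm := hdivmem i1 h1 hi1ub
    have ht0 : (i1:ℝ)/n ≤ xt + h := hm.2
    have ht1 : xt + h - (i1:ℝ)/n ≤ 1/n := by
      have e1 : (b1 - 1)/n ≤ (i1:ℝ)/n := by
        have := hi1lb.le
        gcongr
      have e2 : (b1 - 1)/n = xt + h - 1/n := by
        rw [hb1def]; field_simp
      linarith
    have hb : ∀ x ∈ Set.uIoc ((i1:ℝ)/n) (xt+h), ‖g x‖ ≤ M := by
      intro x hx
      rw [Set.uIoc_of_le ht0] at hx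
      have hxw1 : xt - h ≤ x := le_trans hm.1 hx.1.le
      have hxw2 : x ≤ xt + h := hx.2
      rw [Real.norm_eq_abs]
      exact hMle _ (hwin x hxw1 hxw2)
    have := intervalIntegral.norm_integral_le_of_norm_le_const hb
    rw [Real.norm_eq_abs] at this
    refine le_trans this ?_
    rw [abs_of_nonneg (by linarith)]
    calc M * (xt + h - (i1:ℝ)/n) ≤ M * (1/n) :=
          mul_le_mul_of_nonneg_left ht1 hM0
      _ = M/n := by ring
  -- assemble
  have hwinL : xt - h ∈ Set.Icc (xt-h) (xt+h) := ⟨le_refl _, by linarith⟩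
  have hwinR : xt + h ∈ Set.Icc (xt-h) (xt+h) := ⟨by linarith, le_refl _⟩
  have hwinM : (i1:ℝ)/n ∈ Set.Icc (xt-h) (xt+h) := by
    have h1 : b0 ≤ (i1:ℝ) := le_trans hi0lb (by exact_mod_cast hle)
    exact ⟨(hdivmem i1 h1 hi1ub).1, (hdivmem i1 h1 hi1ub).2⟩
  have hW : ∫ x in (xt-h)..(xt+h), g x
      = (∑ k ∈ Finset.range N, ∫ x in a k..a (k+1), g x)
        + ∫ x in ((i1:ℝ)/n)..(xt+h), g x := by
    rw [hadj]
    exact (intervalIntegral.integral_add_adjacent_intervals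
      (hInt _ _ hwinL hwinM) (hInt _ _ hwinM hwinR)).symm
  rw [hsum, hreind, hcov, hW]
  have efact : (1/((n:ℝ)*h)) * (∑ k ∈ Finset.range N, f ((((i0 + k : ℕ):ℝ)/n - xt)/h))
      - 1/h * ((∑ k ∈ Finset.range N, ∫ x in a k..a (k+1), g x)
          + ∫ x in ((i1:ℝ)/n)..(xt+h), g x)
      = (1/h) * ((∑ k ∈ Finset.range N,
            ((1/(n:ℝ)) * f ((((i0 + k : ℕ):ℝ)/n - xt)/h) - ∫ x in a k..a (k+1), g x))
          - ∫ x in ((i1:ℝ)/n)..(xt+h), g x) := by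
    rw [Finset.sum_sub_distrib, ← Finset.mul_sum]
    ring
  rw [efact, abs_mul, abs_of_pos (show (0:ℝ) < 1/h by positivity)]
  have hS1 : |∑ k ∈ Finset.range N,
        ((1/(n:ℝ)) * f ((((i0 + k : ℕ):ℝ)/n - xt)/h) - ∫ x in a k..a (k+1), g x)|
      ≤ ∑ k ∈ Finset.range N, (M'/((n:ℝ)^2*h) + M*(1/n - (a (k+1) - a k))) :=
    le_trans (Finset.abs_sum_le_sum_abs _ _)
      (Finset.sum_le_sum (fun k hk => hkey k (Finset.mem_range.mp hk)))
  have hS2 : ∑ k ∈ Finset.range N, (M'/((n:ℝ)^2*h) + M*(1/n - (a (k+1) - a k)))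
      = (N:ℝ) * (M'/((n:ℝ)^2*h))
        + M * ((N:ℝ)*(1/n) - ((i1:ℝ)/n - (xt - h))) := by
    rw [Finset.sum_add_distrib, Finset.sum_const, Finset.card_range,
      ← Finset.mul_sum, Finset.sum_sub_distrib, Finset.sum_const, Finset.card_range,
      Finset.sum_range_sub a N, ha0, haN]
    push_cast [nsmul_eq_mul]
    ring
  have hfrac : (N:ℝ)*(1/n) - ((i1:ℝ)/n - (xt - h)) ≤ 1/n := by
    have hxtb : xt - h = b0 * (1/n) := by
      rw [hb0def]; field_simp
    rw [hNcast, hxtb]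
    have e : ((i1:ℝ) - i0 + 1)*(1/n) - ((i1:ℝ)/n - b0*(1/n)) = (1 + b0 - (i0:ℝ))*(1/n) := by
      field_simp
      ring
    rw [e]
    have h6 : (1 + b0 - (i0:ℝ)) ≤ 1 := by linarith
    nlinarith [h6, (by positivity : (0:ℝ) ≤ 1/(n:ℝ))]
  have hN3 : (N:ℝ) ≤ 3*((n:ℝ)*h) := by
    rw [hNcast]; nlinarith
  have hT := htail
  have htri := abs_sub (∑ k ∈ Finset.range N,
      ((1/(n:ℝ)) * f ((((i0 + k : ℕ):ℝ)/n - xt)/h) - ∫ x in a k..a (k+1), g x))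
    (∫ x in ((i1:ℝ)/n)..(xt+h), g x)
  have hbig : |(∑ k ∈ Finset.range N,
        ((1/(n:ℝ)) * f ((((i0 + k : ℕ):ℝ)/n - xt)/h) - ∫ x in a k..a (k+1), g x))
      - ∫ x in ((i1:ℝ)/n)..(xt+h), g x|
      ≤ (N:ℝ) * (M'/((n:ℝ)^2*h)) + M * (1/n) + M/n := by
    have hMfrac : M * ((N:ℝ)*(1/n) - ((i1:ℝ)/n - (xt - h))) ≤ M * (1/n) :=
      mul_le_mul_of_nonneg_left hfrac hM0
    have := hS1.trans (le_of_eq hS2)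
    linarith [htri, hT, hMfrac, this]
  refine le_trans (mul_le_mul_of_nonneg_left hbig (by positivity)) ?_
  have k1 : (N:ℝ)*(M'/((n:ℝ)^2*h)) ≤ (3*((n:ℝ)*h))*(M'/((n:ℝ)^2*h)) :=
    mul_le_mul_of_nonneg_right hN3 (by positivity)
  have k2 : (3*((n:ℝ)*h))*(M'/((n:ℝ)^2*h)) = 3*M'/(n:ℝ) := by
    field_simp
  have k3 : (1/h) * (3*M'/(n:ℝ) + M*(1/n) + M/n) = (3*M' + 2*M)/((n:ℝ)*h) := by
    field_simp
    ring
  calc (1/h) * ((N:ℝ) * (M'/((n:ℝ)^2*h)) + M * (1/n) + M/n)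
      ≤ (1/h) * (3*M'/(n:ℝ) + M*(1/n) + M/n) := by
        apply mul_le_mul_of_nonneg_left _ (by positivity)
        linarith [k1.trans (le_of_eq k2)]
    _ = (3*M' + 2*M)/((n:ℝ)*h) := k3
end
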